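/- arXiv:2004.04357 — 6 statements merged into one kernel-verified Lean document; each statement's English description precedes it below -/
import Mathlib

section
/- (Gradient-mapping comparison, nonsmooth case.) Let $f$ be convex and $\ell_f$-Lipschitz, $h$ convex lower-semicontinuous, $g$ smooth with $L_g$-Lipschitz Jacobian, and $M>\ell_f L_g$. Fix $x\in\operatorname{dom} h$, vectors $\tilde g\in\mathbb{R}^m$ and $\tilde J\in\mathbb{R}^{m\times n}$. Define $\hat x_+ = \operatorname{argmin}_y\{f(g(x)+g'(x)(y-x))+h(y)+\frac{M}{2}\|y-x\|^2\}$ and $x_+ = \operatorname{argmin}_y\{f(\tilde g+\tilde J(y-x))+h(y)+\frac{M}{2}\|y-x\|^2\}$, and let $\mathcal{G}(x)=M(x-\hat x_+)$, $\widetilde{\mathcal{G}}(x)=M(x-x_+)$. Then $\frac{M-\ell_f L_g}{M^2}\|\mathcal{G}(x)\|^2 \le \frac{2M+\ell_f L_g}{M^2}\|\widetilde{\mathcal{G}}(x)\|^2 + 4\ell_f\|\tilde g - g(x)\| + \frac{2\ell_f}{L_g}\|\tilde J - g'(x)\|^2$. -/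
set_option maxHeartbeats 1000000 in
/-- Strong-convexity growth at a minimizer of `F y + M/2‖y-x‖² + h y`. -/
theorem aux_growth5 {n : ℕ} (M : ℝ) (hM : 0 < M)
    (F : EuclideanSpace ℝ (Fin n) → ℝ)
    (h : EuclideanSpace ℝ (Fin n) → EReal)
    (hproper : ∀ y, h y ≠ ⊥)
    (x a b : EuclideanSpace ℝ (Fin n))
    (hha : h a ≠ ⊤) (hhb : h b ≠ ⊤)
    (hFcomb : ∀ t : ℝ, 0 ≤ t → t ≤ 1 →
      F ((1 - t) • a + t • b) ≤ (1 - t) * F a + t * F b)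
    (hcomb : ∀ t : ℝ, 0 ≤ t → t ≤ 1 →
      h ((1 - t) • a + t • b) ≤ (((1 - t : ℝ)) : EReal) * h a + ((t : ℝ) : EReal) * h b)
    (hmin : ∀ y, ((F a + M / 2 * ‖a - x‖ ^ 2 : ℝ) : EReal) + h a ≤
      ((F y + M / 2 * ‖y - x‖ ^ 2 : ℝ) : EReal) + h y) :
    F a + M / 2 * ‖a - x‖ ^ 2 + (h a).toReal + M / 2 * ‖b - a‖ ^ 2 ≤
      F b + M / 2 * ‖b - x‖ ^ 2 + (h b).toReal := by
  set rha := (h a).toReal with hrha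
  set rhb := (h b).toReal with hrhb
  have hca : ((rha : ℝ) : EReal) = h a := EReal.coe_toReal hha (hproper a)
  have hcb : ((rhb : ℝ) : EReal) = h b := EReal.coe_toReal hhb (hproper b)
  set s : ℝ := ‖b - a‖ ^ 2 with hs
  have hsnn : 0 ≤ s := sq_nonneg _
  have key : ∀ t : ℝ, 0 < t → t < 1 →
      F a + M / 2 * ‖a - x‖ ^ 2 + rha + M / 2 * (1 - t) * s ≤
      F b + M / 2 * ‖b - x‖ ^ 2 + rhb := by
    intro t ht0 ht1
    set z := (1 - t) • a + t • b with hz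
    -- value of h at z
    have hhz : h z ≤ (((1 - t) * rha + t * rhb : ℝ) : EReal) := by
      have := hcomb t ht0.le ht1.le
      rw [← hca, ← hcb] at this
      rw [EReal.coe_add, EReal.coe_mul, EReal.coe_mul]
      exact this
    have hztop : h z ≠ ⊤ := by
      intro hc
      rw [hc] at hhz
      exact EReal.coe_ne_top _ (top_le_iff.mp hhz)
    set rz := (h z).toReal with hrz
    have hcz : ((rz : ℝ) : EReal) = h z := EReal.coe_toReal hztop (hproper z)
    have hrzle : rz ≤ (1 - t) * rha + t * rhb := by
      rw [← hcz] at hhz; exact EReal.coe_le_coe_iff.mp hhz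
    -- minimality at z, translated to reals
    have hminz : F a + M / 2 * ‖a - x‖ ^ 2 + rha ≤ F z + M / 2 * ‖z - x‖ ^ 2 + rz := by
      have := hmin z
      rw [← hca, ← hcz, ← EReal.coe_add, ← EReal.coe_add] at this
      exact EReal.coe_le_coe_iff.mp this
    -- convexity of F
    have hFz : F z ≤ (1 - t) * F a + t * F b := hFcomb t ht0.le ht1.le
    -- quadratic identity
    set u := a - x with hu
    set v := b - x with hv
    have hzx : z - x = (1 - t) • u + t • v := by
      rw [hz, hu, hv]; module
    have hip : ‖(1 - t) • u + t • v‖ ^ 2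
        = (1 - t) ^ 2 * ‖u‖ ^ 2 + 2 * ((1 - t) * t) * (inner ℝ u v : ℝ) + t ^ 2 * ‖v‖ ^ 2 := by
      rw [norm_add_sq_real, norm_smul, norm_smul, real_inner_smul_left, real_inner_smul_right,
        Real.norm_eq_abs, Real.norm_eq_abs, abs_of_nonneg (by linarith : (0:ℝ) ≤ 1 - t),
        abs_of_nonneg ht0.le]
      ring
    have hsub : ‖u - v‖ ^ 2 = ‖u‖ ^ 2 - 2 * (inner ℝ u v : ℝ) + ‖v‖ ^ 2 := norm_sub_sq_real u v
    have hsuv : s = ‖u - v‖ ^ 2 := by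
      rw [hu, hv, hs]
      congr 1
      rw [← norm_neg]
      congr 1
      abel
    have hquad : ‖z - x‖ ^ 2 = (1 - t) * ‖u‖ ^ 2 + t * ‖v‖ ^ 2 - t * (1 - t) * s := by
      rw [hzx, hip, hsuv, hsub]; ring
    -- combine; divide by t
    have hstep : t * (F a + M / 2 * ‖a - x‖ ^ 2 + rha + M / 2 * (1 - t) * s)
        ≤ t * (F b + M / 2 * ‖b - x‖ ^ 2 + rhb) := by
      have hMnn : (0:ℝ) ≤ M / 2 := by positivity
      have hux : ‖a - x‖ ^ 2 = ‖u‖ ^ 2 := by rw [hu]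
      have hvx : ‖b - x‖ ^ 2 = ‖v‖ ^ 2 := by rw [hv]
      nlinarith [hminz, hFz, hrzle, hquad, hux, hvx]
    exact le_of_mul_le_mul_left hstep ht0
  -- pass to the limit t → 0
  by_contra hcon
  push_neg at hcon
  set A := F a + M / 2 * ‖a - x‖ ^ 2 + rha with hA
  set B := F b + M / 2 * ‖b - x‖ ^ 2 + rhb with hB
  have hδ : 0 < A + M / 2 * s - B := by
    have : B < A + M / 2 * s := by rw [hA, hB]; linarith [hcon]
    linarith
  set δ := A + M / 2 * s - B with hδdef
  have hden : (0:ℝ) < M * s + 1 := by nlinarith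
  set t := min (1/2 : ℝ) (δ / (M * s + 1)) with ht
  have ht0 : 0 < t := lt_min (by norm_num) (div_pos hδ hden)
  have ht1 : t < 1 := lt_of_le_of_lt (min_le_left _ _) (by norm_num)
  have htle : t * (M * s + 1) ≤ δ := by
    have := min_le_right (1/2 : ℝ) (δ / (M * s + 1))
    calc t * (M * s + 1) ≤ (δ / (M * s + 1)) * (M * s + 1) :=
          mul_le_mul_of_nonneg_right this hden.le
      _ = δ := div_mul_cancel₀ δ hden.ne'
  have h1 := key t ht0 ht1
  have h2 : δ ≤ M / 2 * (t * s) := by nlinarith [h1]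
  have h3 : M * (t * s) + t ≤ δ := by nlinarith [htle]
  clear_value t δ
  nlinarith [h2, h3, hδ, ht0]

set_option maxHeartbeats 1000000 in
/-- Gradient-mapping comparison lemma (nonsmooth case).  `h` is a proper convex
lower-semicontinuous extended-real-valued function; `xhat` and `xplus` are the minimizers
of the exact and approximate prox-linear subproblems at `x`, and
`𝒢(x) = M(x - xhat)`, `𝒢̃(x) = M(x - xplus)`. -/
theorem stmt5 {n m : ℕ}
    (f : EuclideanSpace ℝ (Fin m) → ℝ) (ℓf Lg M : ℝ)
    (hℓf : 0 ≤ ℓf) (hLg : 0 < Lg) (hM : ℓf * Lg < M)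
    (hfconv : ConvexOn ℝ Set.univ f)
    (hf : ∀ u v, |f u - f v| ≤ ℓf * ‖u - v‖)
    (g : EuclideanSpace ℝ (Fin n) → EuclideanSpace ℝ (Fin m))
    (g' : EuclideanSpace ℝ (Fin n) →
      (EuclideanSpace ℝ (Fin n) →L[ℝ] EuclideanSpace ℝ (Fin m)))
    (hg : ∀ u, HasFDerivAt g (g' u) u)
    (hg' : ∀ u v, ‖g' u - g' v‖ ≤ Lg * ‖u - v‖)
    (h : EuclideanSpace ℝ (Fin n) → EReal)
    (hconv : ∀ a b : EuclideanSpace ℝ (Fin n), ∀ t : ℝ, 0 ≤ t → t ≤ 1 →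
      h (t • a + (1 - t) • b) ≤ ((t : ℝ) : EReal) * h a + (((1 - t : ℝ)) : EReal) * h b)
    (hlsc : LowerSemicontinuous h)
    (hproper : ∀ y, h y ≠ ⊥)
    (x : EuclideanSpace ℝ (Fin n)) (hx : h x ≠ ⊤)
    (tg : EuclideanSpace ℝ (Fin m))
    (tJ : EuclideanSpace ℝ (Fin n) →L[ℝ] EuclideanSpace ℝ (Fin m))
    (xhat xplus : EuclideanSpace ℝ (Fin n))
    (hmin1 : ∀ y,
      ((f (g x + g' x (xhat - x)) + M / 2 * ‖xhat - x‖ ^ 2 : ℝ) : EReal) + h xhat ≤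
      ((f (g x + g' x (y - x)) + M / 2 * ‖y - x‖ ^ 2 : ℝ) : EReal) + h y)
    (hmin2 : ∀ y,
      ((f (tg + tJ (xplus - x)) + M / 2 * ‖xplus - x‖ ^ 2 : ℝ) : EReal) + h xplus ≤
      ((f (tg + tJ (y - x)) + M / 2 * ‖y - x‖ ^ 2 : ℝ) : EReal) + h y) :
    (M - ℓf * Lg) / M ^ 2 * ‖M • (x - xhat)‖ ^ 2 ≤
      (2 * M + ℓf * Lg) / M ^ 2 * ‖M • (x - xplus)‖ ^ 2
      + 4 * ℓf * ‖tg - g x‖ + 2 * ℓf / Lg * ‖tJ - g' x‖ ^ 2 := by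
  have hM0 : 0 < M := lt_of_le_of_lt (mul_nonneg hℓf hLg.le) hM
  -- finiteness of h at the minimizers
  have hrx : h x = (((h x).toReal : ℝ) : EReal) := (EReal.coe_toReal hx (hproper x)).symm
  have hfin : ∀ (c c' : ℝ) (a : EuclideanSpace ℝ (Fin n)),
      ((c : ℝ) : EReal) + h a ≤ ((c' : ℝ) : EReal) + h x
      → h a ≠ ⊤ := by
    intro c c' a hle hc
    rw [hc, EReal.coe_add_top, hrx, ← EReal.coe_add, top_le_iff] at hle
    exact EReal.coe_ne_top _ hle
  have h1top : h xhat ≠ ⊤ := hfin _ _ _ (hmin1 x)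
  have h2top : h xplus ≠ ⊤ := hfin _ _ _ (hmin2 x)
  -- convexity of composed pieces along segments
  have hFcombGen : ∀ (c0 : EuclideanSpace ℝ (Fin m))
      (A : EuclideanSpace ℝ (Fin n) →L[ℝ] EuclideanSpace ℝ (Fin m))
      (a b : EuclideanSpace ℝ (Fin n)) (t : ℝ), 0 ≤ t → t ≤ 1 →
      f (c0 + A ((1 - t) • a + t • b - x)) ≤
        (1 - t) * f (c0 + A (a - x)) + t * f (c0 + A (b - x)) := by
    intro c0 A a b t ht0 ht1
    have e1 : (1 - t) • a + t • b - x = (1 - t) • (a - x) + t • (b - x) := by module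
    have e2 : c0 + A ((1 - t) • a + t • b - x)
        = (1 - t) • (c0 + A (a - x)) + t • (c0 + A (b - x)) := by
      rw [e1, map_add, map_smul, map_smul]
      module
    rw [e2]
    have := hfconv.2 (Set.mem_univ (c0 + A (a - x))) (Set.mem_univ (c0 + A (b - x)))
      (by linarith : (0:ℝ) ≤ 1 - t) ht0 (by ring)
    simpa [smul_eq_mul] using this
  -- convexity of h along segments, in the order needed
  have hcombGen : ∀ (a b : EuclideanSpace ℝ (Fin n)) (t : ℝ), 0 ≤ t → t ≤ 1 →
      h ((1 - t) • a + t • b) ≤ (((1 - t : ℝ)) : EReal) * h a + ((t : ℝ) : EReal) * h b := by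
    intro a b t ht0 ht1
    have := hconv b a t ht0 ht1
    have e : (1 - t) • a + t • b = t • b + (1 - t) • a := by abel
    rw [e]
    calc h (t • b + (1 - t) • a) ≤ ((t : ℝ) : EReal) * h b + (((1 - t : ℝ)) : EReal) * h a := this
      _ = (((1 - t : ℝ)) : EReal) * h a + ((t : ℝ) : EReal) * h b := add_comm _ _
  -- growth inequalities for the two subproblems
  have G1 := aux_growth5 M hM0 (fun y => f (g x + g' x (y - x))) h hproper x xhat xplus
    h1top h2top (fun t ht0 ht1 => hFcombGen (g x) (g' x) xhat xplus t ht0 ht1)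
    (fun t ht0 ht1 => hcombGen xhat xplus t ht0 ht1) hmin1
  have G2 := aux_growth5 M hM0 (fun y => f (tg + tJ (y - x))) h hproper x xplus xhat
    h2top h1top (fun t ht0 ht1 => hFcombGen tg tJ xplus xhat t ht0 ht1)
    (fun t ht0 ht1 => hcombGen xplus xhat t ht0 ht1) hmin2
  -- notation
  set na := ‖xhat - x‖ with hna
  set nb := ‖xplus - x‖ with hnb
  set d := ‖xplus - xhat‖ with hd
  set Δg := ‖tg - g x‖ with hΔg
  set ΔJ := ‖tJ - g' x‖ with hΔJ
  have hd' : ‖xhat - xplus‖ = d := norm_sub_rev _ _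
  rw [hd'] at G2
  -- Lipschitz comparison of the two linear models
  have lip : ∀ w : EuclideanSpace ℝ (Fin n),
      |f (g x + g' x (w - x)) - f (tg + tJ (w - x))| ≤ ℓf * (Δg + ΔJ * ‖w - x‖) := by
    intro w
    have h1 := hf (g x + g' x (w - x)) (tg + tJ (w - x))
    have e : (g x + g' x (w - x)) - (tg + tJ (w - x)) = (g x - tg) + (g' x - tJ) (w - x) := by
      rw [ContinuousLinearMap.sub_apply]; abel
    have h2 : ‖(g x + g' x (w - x)) - (tg + tJ (w - x))‖ ≤ Δg + ΔJ * ‖w - x‖ := by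
      rw [e]
      calc ‖(g x - tg) + (g' x - tJ) (w - x)‖ ≤ ‖g x - tg‖ + ‖(g' x - tJ) (w - x)‖ :=
            norm_add_le _ _
        _ ≤ ‖g x - tg‖ + ‖g' x - tJ‖ * ‖w - x‖ := by
            linarith [ContinuousLinearMap.le_opNorm (g' x - tJ) (w - x)]
        _ = Δg + ΔJ * ‖w - x‖ := by rw [norm_sub_rev (g x) tg, norm_sub_rev (g' x) tJ]
    calc |f (g x + g' x (w - x)) - f (tg + tJ (w - x))| ≤ ℓf * ‖(g x + g' x (w - x)) - (tg + tJ (w - x))‖ := h1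
      _ ≤ ℓf * (Δg + ΔJ * ‖w - x‖) := mul_le_mul_of_nonneg_left h2 hℓf
  have lipa := abs_le.mp (lip xhat)
  have lipb := abs_le.mp (lip xplus)
  -- cross inequality
  have cross : M * d ^ 2 ≤ 2 * ℓf * Δg + ℓf * ΔJ * na + ℓf * ΔJ * nb := by
    nlinarith [G1, G2, lipa.1, lipa.2, lipb.1, lipb.2]
  -- triangle inequality
  have htri : na ≤ d + nb := by
    have : xhat - x = -(xplus - xhat) + (xplus - x) := by abel
    rw [hna, this]
    calc ‖-(xplus - xhat) + (xplus - x)‖ ≤ ‖-(xplus - xhat)‖ + ‖xplus - x‖ := norm_add_le _ _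
      _ = d + nb := by rw [norm_neg]
  -- Young's inequality pieces, with q = ℓf / Lg
  have hq : 0 ≤ ℓf / Lg := div_nonneg hℓf hLg.le
  have hℓq : ℓf = (ℓf / Lg) * Lg := (div_mul_cancel₀ ℓf hLg.ne').symm
  -- the clean core inequality
  have main : (M - ℓf * Lg) * na ^ 2 ≤
      (2 * M + ℓf * Lg) * nb ^ 2 + 4 * ℓf * Δg + 2 * (ℓf / Lg) * ΔJ ^ 2 := by
    have y1 : 0 ≤ (ℓf / Lg) * (Lg * na - ΔJ) ^ 2 := mul_nonneg hq (sq_nonneg _)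
    have y2 : 0 ≤ (ℓf / Lg) * (Lg * nb - ΔJ) ^ 2 := mul_nonneg hq (sq_nonneg _)
    have hdnn : 0 ≤ d := norm_nonneg _
    have hnbnn : 0 ≤ nb := norm_nonneg _
    have hnann : 0 ≤ na := norm_nonneg _
    have hna2 : na ^ 2 ≤ 2 * d ^ 2 + 2 * nb ^ 2 := by nlinarith [sq_nonneg (d - nb)]
    nlinarith [cross, y1, y2, hℓq, mul_le_mul_of_nonneg_left hna2 hM0.le]
  -- convert to the stated form
  have hsm : ∀ w : EuclideanSpace ℝ (Fin n), ‖M • w‖ ^ 2 = M ^ 2 * ‖w‖ ^ 2 := by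
    intro w
    rw [norm_smul, Real.norm_eq_abs, abs_of_pos hM0]
    ring
  rw [hsm, hsm, norm_sub_rev x xhat, norm_sub_rev x xplus]
  have hM2 : (M:ℝ) ^ 2 ≠ 0 := by positivity
  have e1 : (M - ℓf * Lg) / M ^ 2 * (M ^ 2 * na ^ 2) = (M - ℓf * Lg) * na ^ 2 := by
    field_simp
  have e2 : (2 * M + ℓf * Lg) / M ^ 2 * (M ^ 2 * nb ^ 2) = (2 * M + ℓf * Lg) * nb ^ 2 := by
    field_simp
  have e3 : 2 * ℓf / Lg * ΔJ ^ 2 = 2 * (ℓf / Lg) * ΔJ ^ 2 := by ring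
  rw [e1, e2, e3]
  linarith [main]
end

section
/- (Descent lemma for inexact prox-linear step, nonsmooth case.) Under the same assumptions as the gradient-mapping comparison lemma with $\Phi(x)=f(g(x))+h(x)$, the point $x_+ = \operatorname{argmin}_y\{f(\tilde g+\tilde J(y-x))+h(y)+\frac{M}{2}\|y-x\|^2\}$ satisfies $\Phi(x_+) \le \Phi(x) - \bigl(\frac{M}{2}-\ell_f L_g\bigr)\|x_+-x\|^2 + 2\ell_f\|\tilde g-g(x)\| + \frac{\ell_f}{2L_g}\|\tilde J-g'(x)\|^2$. -/
open Set

lemma taylor_aux {n m : ℕ} (g : EuclideanSpace ℝ (Fin n) → EuclideanSpace ℝ (Fin m))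
    (g' : EuclideanSpace ℝ (Fin n) →
      (EuclideanSpace ℝ (Fin n) →L[ℝ] EuclideanSpace ℝ (Fin m)))
    (hg : ∀ u, HasFDerivAt g (g' u) u) (Lg : ℝ)
    (hg' : ∀ u v, ‖g' u - g' v‖ ≤ Lg * ‖u - v‖)
    (x y : EuclideanSpace ℝ (Fin n)) :
    ‖g y - g x - g' x (y - x)‖ ≤ Lg / 2 * ‖y - x‖ ^ 2 := by
  set d := y - x with hd
  set φ : ℝ → EuclideanSpace ℝ (Fin m) :=
    fun t => g (x + t • d) - g x - t • (g' x d) with hφ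
  have hφ' : ∀ t : ℝ, HasDerivAt φ (g' (x + t • d) d - g' x d) t := by
    intro t
    have hc : HasDerivAt (fun t : ℝ => x + t • d) d t := by
      simpa using ((hasDerivAt_id t).smul_const d).const_add x
    have h1 : HasDerivAt (fun t : ℝ => g (x + t • d)) (g' (x + t • d) d) t :=
      (hg (x + t • d)).comp_hasDerivAt t hc
    exact (h1.sub_const (g x)).sub (by simpa using (hasDerivAt_id t).smul_const (g' x d))
  have hB : ∀ t : ℝ, HasDerivAt (fun t : ℝ => Lg * ‖d‖ ^ 2 / 2 * t ^ 2)
      (Lg * ‖d‖ ^ 2 * t) t := by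
    intro t
    have := (hasDerivAt_pow 2 t).const_mul (Lg * ‖d‖ ^ 2 / 2)
    refine this.congr_deriv ?_
    ring
  have bound : ∀ t ∈ Ico (0:ℝ) 1,
      ‖g' (x + t • d) d - g' x d‖ ≤ Lg * ‖d‖ ^ 2 * t := by
    intro t ht
    have e1 : g' (x + t • d) d - g' x d = (g' (x + t • d) - g' x) d := by simp
    rw [e1]
    calc ‖(g' (x + t • d) - g' x) d‖ ≤ ‖g' (x + t • d) - g' x‖ * ‖d‖ :=
          ContinuousLinearMap.le_opNorm _ _
      _ ≤ (Lg * ‖x + t • d - x‖) * ‖d‖ :=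
          mul_le_mul_of_nonneg_right (hg' _ _) (norm_nonneg _)
      _ = Lg * ‖d‖ ^ 2 * t := by
          rw [add_sub_cancel_left, norm_smul, Real.norm_eq_abs, abs_of_nonneg ht.1]
          ring
  have key := image_norm_le_of_norm_deriv_right_le_deriv_boundary
    (f := φ) (a := 0) (b := 1) (f' := fun t => g' (x + t • d) d - g' x d)
    (fun t _ => (hφ' t).continuousAt.continuousWithinAt)
    (fun t _ => (hφ' t).hasDerivWithinAt)
    (by simp [φ]) hB bound
  have k1 := key (right_mem_Icc.2 zero_le_one)
  have e2 : φ 1 = g y - g x - g' x d := by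
    simp [φ, hd]
  rw [e2] at k1
  calc ‖g y - g x - g' x d‖ ≤ Lg * ‖d‖ ^ 2 / 2 * 1 ^ 2 := k1
    _ = Lg / 2 * ‖d‖ ^ 2 := by ring

/-- Descent lemma for the inexact prox-linear step (nonsmooth case).  With
`Φ = f ∘ g + h`, the minimizer `xplus` of the approximate prox-linear subproblem
satisfies `Φ(xplus) ≤ Φ(x) - (M/2 - ℓf Lg)‖xplus - x‖² + 2ℓf‖tg - g(x)‖
+ (ℓf/(2Lg))‖tJ - g'(x)‖²`. -/
theorem stmt6 {n m : ℕ}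
    (f : EuclideanSpace ℝ (Fin m) → ℝ) (ℓf Lg M : ℝ)
    (hℓf : 0 ≤ ℓf) (hLg : 0 < Lg) (hM : 0 < M)
    (hfconv : ConvexOn ℝ Set.univ f)
    (hf : ∀ u v, |f u - f v| ≤ ℓf * ‖u - v‖)
    (g : EuclideanSpace ℝ (Fin n) → EuclideanSpace ℝ (Fin m))
    (g' : EuclideanSpace ℝ (Fin n) →
      (EuclideanSpace ℝ (Fin n) →L[ℝ] EuclideanSpace ℝ (Fin m)))
    (hg : ∀ u, HasFDerivAt g (g' u) u)
    (hg' : ∀ u v, ‖g' u - g' v‖ ≤ Lg * ‖u - v‖)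
    (h : EuclideanSpace ℝ (Fin n) → EReal)
    (hconv : ∀ a b : EuclideanSpace ℝ (Fin n), ∀ t : ℝ, 0 ≤ t → t ≤ 1 →
      h (t • a + (1 - t) • b) ≤ ((t : ℝ) : EReal) * h a + (((1 - t : ℝ)) : EReal) * h b)
    (hlsc : LowerSemicontinuous h)
    (hproper : ∀ y, h y ≠ ⊥)
    (x : EuclideanSpace ℝ (Fin n)) (hx : h x ≠ ⊤)
    (tg : EuclideanSpace ℝ (Fin m))
    (tJ : EuclideanSpace ℝ (Fin n) →L[ℝ] EuclideanSpace ℝ (Fin m))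
    (xplus : EuclideanSpace ℝ (Fin n))
    (hmin : ∀ y,
      ((f (tg + tJ (xplus - x)) + M / 2 * ‖xplus - x‖ ^ 2 : ℝ) : EReal) + h xplus ≤
      ((f (tg + tJ (y - x)) + M / 2 * ‖y - x‖ ^ 2 : ℝ) : EReal) + h y) :
    ((f (g xplus) : ℝ) : EReal) + h xplus ≤
      ((f (g x) : ℝ) : EReal) + h x +
      ((2 * ℓf * ‖tg - g x‖ + ℓf / (2 * Lg) * ‖tJ - g' x‖ ^ 2
        - (M / 2 - ℓf * Lg) * ‖xplus - x‖ ^ 2 : ℝ) : EReal) := by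
  set d := xplus - x with hd
  set A : ℝ := f (tg + tJ d) + M / 2 * ‖d‖ ^ 2 with hA
  -- the minimality inequality at y = x
  have h1 : (A : EReal) + h xplus ≤ ((f tg : ℝ) : EReal) + h x := by
    have := hmin x
    simpa [hA] using this
  -- h x is real
  set a : ℝ := (h x).toReal with ha
  have hxa : h x = (a : EReal) := (EReal.coe_toReal hx (hproper x)).symm
  -- h xplus is real
  have hxptop : h xplus ≠ ⊤ := by
    intro htop
    rw [htop, hxa] at h1
    have : (A : EReal) + ⊤ = ⊤ := by
      rw [EReal.add_top_iff_ne_bot]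
      exact EReal.coe_ne_bot A
    rw [this] at h1
    have : ((f tg : ℝ) : EReal) + (a : EReal) = ((f tg + a : ℝ) : EReal) := by
      exact_mod_cast (EReal.coe_add _ _).symm
    rw [this] at h1
    exact (EReal.coe_ne_top _ ) (top_le_iff.mp h1)
  set b : ℝ := (h xplus).toReal with hb
  have hxpb : h xplus = (b : EReal) := (EReal.coe_toReal hxptop (hproper xplus)).symm
  -- real version of minimality
  have h1' : A + b ≤ f tg + a := by
    rw [hxa, hxpb] at h1
    exact_mod_cast h1
  -- Lipschitz estimates
  have h2 : f (g xplus) - f (tg + tJ d) ≤ ℓf * ‖g xplus - (tg + tJ d)‖ :=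
    le_trans (le_abs_self _) (hf _ _)
  have h3 : f tg - f (g x) ≤ ℓf * ‖tg - g x‖ :=
    le_trans (le_abs_self _) (hf _ _)
  -- decomposition bound
  have hdecomp : g xplus - (tg + tJ d) =
      (g xplus - g x - g' x d) + (g x - tg) + (g' x d - tJ d) := by
    abel
  have t1 := taylor_aux g g' hg Lg hg' x xplus
  rw [← hd] at t1
  have t3 : ‖g' x d - tJ d‖ ≤ ‖tJ - g' x‖ * ‖d‖ := by
    have e : g' x d - tJ d = (g' x - tJ) d := by simp
    rw [e]
    calc ‖(g' x - tJ) d‖ ≤ ‖g' x - tJ‖ * ‖d‖ := ContinuousLinearMap.le_opNorm _ _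
      _ = ‖tJ - g' x‖ * ‖d‖ := by rw [norm_sub_rev]
  have h4 : ‖g xplus - (tg + tJ d)‖ ≤
      Lg / 2 * ‖d‖ ^ 2 + ‖tg - g x‖ + ‖tJ - g' x‖ * ‖d‖ := by
    rw [hdecomp]
    have n1 := norm_add_le ((g xplus - g x - g' x d) + (g x - tg)) (g' x d - tJ d)
    have n2 := norm_add_le (g xplus - g x - g' x d) (g x - tg)
    have n3 : ‖g x - tg‖ = ‖tg - g x‖ := norm_sub_rev _ _
    linarith
  have h4' := mul_le_mul_of_nonneg_left h4 hℓf
  -- AM-GM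
  have key : 2 * Lg * (‖tJ - g' x‖ * ‖d‖) ≤ ‖tJ - g' x‖ ^ 2 + Lg ^ 2 * ‖d‖ ^ 2 := by
    nlinarith [sq_nonneg (‖tJ - g' x‖ - Lg * ‖d‖)]
  have h5 : ℓf * (‖tJ - g' x‖ * ‖d‖) ≤
      ℓf / (2 * Lg) * ‖tJ - g' x‖ ^ 2 + ℓf * Lg / 2 * ‖d‖ ^ 2 := by
    have h6 := mul_le_mul_of_nonneg_left key
      (div_nonneg hℓf (by linarith : (0:ℝ) ≤ 2 * Lg))
    have hne : (2 * Lg) ≠ 0 := by positivity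
    calc ℓf * (‖tJ - g' x‖ * ‖d‖)
        = ℓf / (2 * Lg) * (2 * Lg * (‖tJ - g' x‖ * ‖d‖)) := by field_simp
      _ ≤ ℓf / (2 * Lg) * (‖tJ - g' x‖ ^ 2 + Lg ^ 2 * ‖d‖ ^ 2) := h6
      _ = ℓf / (2 * Lg) * ‖tJ - g' x‖ ^ 2 + ℓf * Lg / 2 * ‖d‖ ^ 2 := by
          field_simp
  -- real goal
  have goal : f (g xplus) + b ≤ f (g x) + a +
      (2 * ℓf * ‖tg - g x‖ + ℓf / (2 * Lg) * ‖tJ - g' x‖ ^ 2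
        - (M / 2 - ℓf * Lg) * ‖d‖ ^ 2) := by
    rw [hA] at h1'
    linarith [h1', h2, h3, h4', h5]
  rw [hxa, hxpb]
  exact_mod_cast goal
end

section
/- (Corrected SVRG estimator error.) With the notation of the previous lemma, let $\mathcal{B}$ be a batch of $B$ indices sampled independently and uniformly with replacement from $\{1,\dots,N\}$, and define $\tilde g = \frac{1}{B}\sum_{j\in\mathcal{B}}\bigl(g_j(x)-g_j(x_0)-g_j'(x_0)(x-x_0)\bigr) + g(x_0)+g'(x_0)(x-x_0)$. Then $\mathbb{E}\|\tilde g - g(x)\| \le \frac{L_g}{2\sqrt{B}}\|x-x_0\|^2$. -/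
lemma sum_eval_one {ι : Type*} [Fintype ι] [DecidableEq ι] {N : ℕ} (k : ι) (G : Fin N → ℝ) :
    ∑ β : ι → Fin N, G (β k) = (N : ℝ) ^ (Fintype.card ι - 1) * ∑ i, G i := by
  rw [Fintype.sum_equiv (Equiv.funSplitAt k (Fin N)) (fun β => G (β k)) (fun p => G p.1) (fun β => rfl)]
  rw [Fintype.sum_prod_type]
  have hcard : Fintype.card ({ j : ι // j ≠ k } → Fin N) = N ^ (Fintype.card ι - 1) := by
    rw [Fintype.card_fun, Fintype.card_fin]
    congr 1
    rw [Fintype.card_subtype_compl, Fintype.card_subtype_eq]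
  simp [Finset.sum_const, Finset.card_univ, hcard, nsmul_eq_mul, Finset.mul_sum]

lemma sum_eval_two {ι : Type*} [Fintype ι] [DecidableEq ι] {N : ℕ} {k l : ι} (hkl : l ≠ k)
    (F : Fin N → Fin N → ℝ) :
    ∑ β : ι → Fin N, F (β k) (β l)
      = (N : ℝ) ^ (Fintype.card ι - 2) * ∑ i, ∑ j, F i j := by
  rw [Fintype.sum_equiv (Equiv.funSplitAt k (Fin N)) (fun β => F (β k) (β l))
    (fun p => F p.1 (p.2 ⟨l, hkl⟩)) (fun β => rfl)]
  rw [Fintype.sum_prod_type]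
  have h1 : ∀ i : Fin N, ∑ r : { j : ι // j ≠ k } → Fin N, F i (r ⟨l, hkl⟩)
      = (N : ℝ) ^ (Fintype.card { j : ι // j ≠ k } - 1) * ∑ j, F i j :=
    fun i => sum_eval_one (⟨l, hkl⟩ : { j : ι // j ≠ k }) (fun j => F i j)
  have h2 : Fintype.card { j : ι // j ≠ k } - 1 = Fintype.card ι - 2 := by
    rw [Fintype.card_subtype_compl, Fintype.card_subtype_eq]
    omega
  simp_rw [h1, h2]
  rw [Finset.mul_sum]

lemma var_id {m N B : ℕ} (Z : Fin N → EuclideanSpace ℝ (Fin m)) (hZ0 : ∑ i, Z i = 0) :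
    ∑ β : Fin B → Fin N, ‖∑ k, Z (β k)‖ ^ 2
      = (B : ℝ) * (N : ℝ) ^ (B - 1) * ∑ i, ‖Z i‖ ^ 2 := by
  have expand : ∀ β : Fin B → Fin N, ‖∑ k, Z (β k)‖ ^ 2
      = ∑ k, ∑ l, (inner ℝ (Z (β k)) (Z (β l)) : ℝ) := by
    intro β
    rw [← real_inner_self_eq_norm_sq, sum_inner]
    exact Finset.sum_congr rfl fun k _ => inner_sum _ _ _
  simp_rw [expand]
  rw [Finset.sum_comm]
  have inner_zero : ∑ i, ∑ j, (inner ℝ (Z i) (Z j) : ℝ) = 0 := by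
    have : ∑ i, ∑ j, (inner ℝ (Z i) (Z j) : ℝ) = inner ℝ (∑ i, Z i) (∑ j, Z j) := by
      rw [sum_inner]
      exact Finset.sum_congr rfl fun k _ => (inner_sum _ _ _).symm
    rw [this, hZ0, inner_zero_left]
  have step : ∀ k : Fin B, ∑ β : Fin B → Fin N, ∑ l, (inner ℝ (Z (β k)) (Z (β l)) : ℝ)
      = (N : ℝ) ^ (B - 1) * ∑ i, ‖Z i‖ ^ 2 := by
    intro k
    rw [Finset.sum_comm, Finset.sum_eq_single k]
    · rw [sum_eval_one k (fun i => (inner ℝ (Z i) (Z i) : ℝ))]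
      simp_rw [real_inner_self_eq_norm_sq]
      simp
    · intro l _ hlk
      rw [sum_eval_two hlk (fun i j => (inner ℝ (Z i) (Z j) : ℝ)), inner_zero, mul_zero]
    · simp
  calc ∑ k : Fin B, ∑ β : Fin B → Fin N, ∑ l, (inner ℝ (Z (β k)) (Z (β l)) : ℝ)
      = ∑ _k : Fin B, (N : ℝ) ^ (B - 1) * ∑ i, ‖Z i‖ ^ 2 :=
        Finset.sum_congr rfl fun k _ => step k
    _ = (B : ℝ) * (N : ℝ) ^ (B - 1) * ∑ i, ‖Z i‖ ^ 2 := by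
        simp [Finset.sum_const, Finset.card_univ, mul_assoc]

open Set

lemma taylor_quad {E F : Type*} [NormedAddCommGroup E] [NormedSpace ℝ E]
    [NormedAddCommGroup F] [NormedSpace ℝ F]
    (f : E → F) (f' : E → E →L[ℝ] F) (Lc : ℝ)
    (hf : ∀ u, HasFDerivAt f (f' u) u)
    (hlip : ∀ u v, ‖f' u - f' v‖ ≤ Lc * ‖u - v‖) (x x₀ : E) :
    ‖f x - f x₀ - f' x₀ (x - x₀)‖ ≤ Lc / 2 * ‖x - x₀‖ ^ 2 := by
  set v := x - x₀ with hv
  set c : ℝ → E := fun t => x₀ + t • v with hc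
  set G : ℝ → F := fun t => f (c t) - f x₀ - t • f' x₀ v with hG
  have hcder : ∀ t : ℝ, HasDerivAt c v t := by
    intro t
    simpa [hc] using ((hasDerivAt_id t).smul_const v).const_add x₀
  have hGder : ∀ t : ℝ, HasDerivAt G (f' (c t) v - f' x₀ v) t := by
    intro t
    have h1 : HasDerivAt (fun t => f (c t)) (f' (c t) v) t :=
      (hf (c t)).comp_hasDerivAt t (hcder t)
    have h2 : HasDerivAt (fun t : ℝ => t • f' x₀ v) (f' x₀ v) t := by
      simpa using (hasDerivAt_id t).smul_const (f' x₀ v)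
    exact (h1.sub_const (f x₀)).sub h2
  have hB : ∀ t : ℝ, HasDerivAt (fun t => Lc / 2 * ‖v‖ ^ 2 * t ^ 2) (Lc * ‖v‖ ^ 2 * t) t := by
    intro t
    have := (hasDerivAt_pow 2 t).const_mul (Lc / 2 * ‖v‖ ^ 2)
    exact this.congr_deriv (by push_cast; ring)
  have key := image_norm_le_of_norm_deriv_right_le_deriv_boundary
    (f := G) (f' := fun t => f' (c t) v - f' x₀ v) (a := 0) (b := 1)
    (fun t _ => (hGder t).continuousAt.continuousWithinAt)
    (fun t _ => (hGder t).hasDerivWithinAt)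
    (by simp [hG, hc])
    hB
    (by
      intro t ht
      have h1 : ‖f' (c t) v - f' x₀ v‖ ≤ ‖f' (c t) - f' x₀‖ * ‖v‖ := by
        simpa using (f' (c t) - f' x₀).le_opNorm v
      have h2 : ‖f' (c t) - f' x₀‖ * ‖v‖ ≤ (Lc * ‖c t - x₀‖) * ‖v‖ :=
        mul_le_mul_of_nonneg_right (hlip _ _) (norm_nonneg v)
      have h3 : ‖c t - x₀‖ = t * ‖v‖ := by
        simp [hc, norm_smul, abs_of_nonneg ht.1]
      calc ‖f' (c t) v - f' x₀ v‖ ≤ (Lc * ‖c t - x₀‖) * ‖v‖ := h1.trans h2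
        _ = Lc * ‖v‖ ^ 2 * t := by rw [h3]; ring)
  have h1 := key (right_mem_Icc.2 zero_le_one)
  have hc1 : c 1 = x := by simp [hc, hv]
  have hG1 : G 1 = f x - f x₀ - f' x₀ v := by simp [hG, hc1]
  rw [hG1] at h1
  simpa using h1

/-- Corrected SVRG estimator error: with a batch `β` of `B` indices drawn i.i.d.
uniformly from `{1,…,N}` (expectation = average over all `β : Fin B → Fin N`),
the estimator `g̃` satisfies `𝔼‖g̃ - g(x)‖ ≤ (L_g/(2√B))‖x - x₀‖²`. -/
theorem stmt9 {n m N B : ℕ} (hN : 0 < N) (hB : 0 < B)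
    (g : Fin N → EuclideanSpace ℝ (Fin n) → EuclideanSpace ℝ (Fin m))
    (g' : Fin N → EuclideanSpace ℝ (Fin n) →
      (EuclideanSpace ℝ (Fin n) →L[ℝ] EuclideanSpace ℝ (Fin m)))
    (L : Fin N → ℝ) (Lg : ℝ) (hL : ∀ j, 0 ≤ L j)
    (hg : ∀ j u, HasFDerivAt (g j) (g' j u) u)
    (hLip : ∀ j u v, ‖g' j u - g' j v‖ ≤ L j * ‖u - v‖)
    (hLg : Lg = Real.sqrt ((N : ℝ)⁻¹ * ∑ j, L j ^ 2))
    (x x₀ : EuclideanSpace ℝ (Fin n)) :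
    ((N : ℝ) ^ B)⁻¹ * ∑ β : Fin B → Fin N,
      ‖(B : ℝ)⁻¹ • (∑ k, (g (β k) x - g (β k) x₀ - g' (β k) x₀ (x - x₀)))
        + ((N : ℝ)⁻¹ • ∑ i, g i x₀) + ((N : ℝ)⁻¹ • ∑ i, g' i x₀) (x - x₀)
        - (N : ℝ)⁻¹ • ∑ i, g i x‖
      ≤ Lg / (2 * Real.sqrt B) * ‖x - x₀‖ ^ 2 := by
  have hNR : ((N : ℝ)) ≠ 0 := Nat.cast_ne_zero.2 hN.ne'
  have hBR : ((B : ℝ)) ≠ 0 := Nat.cast_ne_zero.2 hB.ne'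
  set v : EuclideanSpace ℝ (Fin n) := x - x₀ with hv
  set Y : Fin N → EuclideanSpace ℝ (Fin m) :=
    fun i => g i x - g i x₀ - g' i x₀ v with hY
  set c : EuclideanSpace ℝ (Fin m) := (N : ℝ)⁻¹ • ∑ i, Y i with hc
  set Z : Fin N → EuclideanSpace ℝ (Fin m) := fun i => Y i - c with hZ
  have hsumY : ∑ i, Y i = (N : ℝ) • c := by
    rw [hc, smul_smul, mul_inv_cancel₀ hNR, one_smul]
  have hZ0 : ∑ i, Z i = 0 := by
    simp only [hZ, Finset.sum_sub_distrib, Finset.sum_const, Finset.card_univ,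
      Fintype.card_fin]
    rw [hsumY, ← Nat.cast_smul_eq_nsmul ℝ, sub_self]
  -- pointwise rewrite of the estimator error
  have hpoint : ∀ β : Fin B → Fin N,
      (B : ℝ)⁻¹ • (∑ k, (g (β k) x - g (β k) x₀ - g' (β k) x₀ v))
        + ((N : ℝ)⁻¹ • ∑ i, g i x₀) + ((N : ℝ)⁻¹ • ∑ i, g' i x₀) v
        - (N : ℝ)⁻¹ • ∑ i, g i x
      = (B : ℝ)⁻¹ • ∑ k, Z (β k) := by
    intro β
    have happ : ((N : ℝ)⁻¹ • ∑ i, g' i x₀) v = (N : ℝ)⁻¹ • ∑ i, g' i x₀ v := by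
      rw [ContinuousLinearMap.smul_apply, ContinuousLinearMap.sum_apply]
    have hsum : ∑ k, Z (β k) = (∑ k, Y (β k)) - (B : ℝ) • c := by
      simp only [hZ, Finset.sum_sub_distrib, Finset.sum_const, Finset.card_univ,
        Fintype.card_fin, ← Nat.cast_smul_eq_nsmul ℝ]
    have hcY : c = (N : ℝ)⁻¹ • ∑ i, g i x - (N : ℝ)⁻¹ • ∑ i, g i x₀
        - (N : ℝ)⁻¹ • ∑ i, g' i x₀ v := by
      rw [hc, hY]
      simp only [Finset.sum_sub_distrib, smul_sub]
    rw [happ, hsum, smul_sub, smul_smul, inv_mul_cancel₀ hBR, one_smul, hcY]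
    abel
  simp only [hpoint]
  -- Taylor bound on each Y i
  have hYb : ∀ i, ‖Y i‖ ≤ L i / 2 * ‖v‖ ^ 2 := fun i =>
    taylor_quad (g i) (g' i) (L i) (hg i) (hLip i) x x₀
  set W : (Fin B → Fin N) → EuclideanSpace ℝ (Fin m) :=
    fun β => (B : ℝ)⁻¹ • ∑ k, Z (β k) with hW
  have hRnn : 0 ≤ Lg / (2 * Real.sqrt B) * ‖v‖ ^ 2 := by
    rw [hLg]; positivity
  refine le_of_pow_le_pow_left₀ (n := 2) two_ne_zero hRnn ?_
  -- square of the RHS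
  have hLnn : 0 ≤ (N : ℝ)⁻¹ * ∑ j, L j ^ 2 := by positivity
  have hR2 : (Lg / (2 * Real.sqrt B) * ‖v‖ ^ 2) ^ 2
      = (∑ j, L j ^ 2) * ‖v‖ ^ 4 / (4 * N * B) := by
    rw [hLg]
    rw [mul_pow, div_pow, mul_pow, Real.sq_sqrt hLnn, Real.sq_sqrt (Nat.cast_nonneg B)]
    field_simp
    ring
  rw [hR2]
  -- Cauchy-Schwarz over the batch space
  have hS2 : (∑ β, ‖W β‖) ^ 2 ≤ ((N : ℝ)) ^ B * ∑ β, ‖W β‖ ^ 2 := by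
    have h := sq_sum_le_card_mul_sum_sq (s := (Finset.univ : Finset (Fin B → Fin N)))
      (f := fun β => ‖W β‖)
    have hcard : ((Finset.univ : Finset (Fin B → Fin N)).card : ℝ) = (N : ℝ) ^ B := by
      rw [Finset.card_univ, Fintype.card_fun, Fintype.card_fin, Fintype.card_fin]
      push_cast; ring
    rwa [hcard] at h
  -- second moment computation
  have hWsq : ∑ β, ‖W β‖ ^ 2
      = ((B : ℝ)⁻¹) ^ 2 * ((B : ℝ) * (N : ℝ) ^ (B - 1) * ∑ i, ‖Z i‖ ^ 2) := by
    have : ∀ β : Fin B → Fin N, ‖W β‖ ^ 2 = ((B : ℝ)⁻¹) ^ 2 * ‖∑ k, Z (β k)‖ ^ 2 := by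
      intro β
      rw [hW, norm_smul, mul_pow, Real.norm_eq_abs,
        abs_of_nonneg (inv_nonneg.2 (Nat.cast_nonneg B))]
    simp_rw [this, ← Finset.mul_sum]
    rw [var_id Z hZ0]
  -- variance bound
  have hZle : ∑ i, ‖Z i‖ ^ 2 ≤ ∑ i, ‖Y i‖ ^ 2 := by
    have hid : ∑ i, ‖Z i‖ ^ 2
        = ∑ i, ‖Y i‖ ^ 2 - 2 * ((N : ℝ) * ‖c‖ ^ 2) + (N : ℝ) * ‖c‖ ^ 2 := by
      have h1 : ∀ i, ‖Z i‖ ^ 2 = ‖Y i‖ ^ 2 - 2 * (inner ℝ (Y i) c : ℝ) + ‖c‖ ^ 2 :=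
        fun i => norm_sub_sq_real (Y i) c
      simp_rw [h1]
      rw [Finset.sum_add_distrib, Finset.sum_sub_distrib, ← Finset.mul_sum,
        ← sum_inner, hsumY, real_inner_smul_left, real_inner_self_eq_norm_sq,
        Finset.sum_const, Finset.card_univ, Fintype.card_fin, nsmul_eq_mul]
    nlinarith [mul_nonneg (Nat.cast_nonneg (α := ℝ) N) (sq_nonneg ‖c‖)]
  have hYle : ∑ i, ‖Y i‖ ^ 2 ≤ (∑ j, L j ^ 2) * ‖v‖ ^ 4 / 4 := by
    have : ∀ i, ‖Y i‖ ^ 2 ≤ (L i / 2 * ‖v‖ ^ 2) ^ 2 := fun i =>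
      pow_le_pow_left₀ (norm_nonneg _) (hYb i) 2
    calc ∑ i, ‖Y i‖ ^ 2 ≤ ∑ i, (L i / 2 * ‖v‖ ^ 2) ^ 2 :=
          Finset.sum_le_sum fun i _ => this i
      _ = (∑ j, L j ^ 2) * ‖v‖ ^ 4 / 4 := by
          have h4 : ∀ i : Fin N, (L i / 2 * ‖v‖ ^ 2) ^ 2 = L i ^ 2 * ‖v‖ ^ 4 / 4 :=
            fun i => by ring
          simp_rw [h4]
          rw [← Finset.sum_div, ← Finset.sum_mul]
  -- put it all together
  have hpow : ((N : ℝ)) ^ (B - 1) * (N : ℝ) = (N : ℝ) ^ B := pow_sub_one_mul hB.ne' _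
  have hNBpos : (0 : ℝ) < (N : ℝ) ^ B := by positivity
  calc (((N : ℝ) ^ B)⁻¹ * ∑ β, ‖W β‖) ^ 2
      = (((N : ℝ) ^ B)⁻¹) ^ 2 * (∑ β, ‖W β‖) ^ 2 := by rw [mul_pow]
    _ ≤ (((N : ℝ) ^ B)⁻¹) ^ 2 * ((N : ℝ) ^ B * ∑ β, ‖W β‖ ^ 2) :=
        mul_le_mul_of_nonneg_left hS2 (by positivity)
    _ = ((N : ℝ) ^ B)⁻¹ * ((B : ℝ)⁻¹) ^ 2 * ((B : ℝ) * (N : ℝ) ^ (B - 1)) *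
          ∑ i, ‖Z i‖ ^ 2 := by
        rw [hWsq]; field_simp
    _ ≤ ((N : ℝ) ^ B)⁻¹ * ((B : ℝ)⁻¹) ^ 2 * ((B : ℝ) * (N : ℝ) ^ (B - 1)) *
          ((∑ j, L j ^ 2) * ‖v‖ ^ 4 / 4) := by
        refine mul_le_mul_of_nonneg_left (hZle.trans hYle) ?_
        positivity
    _ = (∑ j, L j ^ 2) * ‖v‖ ^ 4 / (4 * N * B) := by
        rw [← hpow]
        field_simp
end

section
/- (Smooth descent lemma for inexact prox-linear step.) Suppose $f:\mathbb{R}^m\to\mathbb{R}$ is convex, $\ell_f$-Lipschitz, twice differentiable with $\|f''(z)\|\le L_f$ for all $z$; $h$ is proper convex lower-semicontinuous; $g$ is differentiable with $\|g'(x)\|\le\ell_g$ and $L_g$-Lipschitz Jacobian. Let $L_{f\circ g}=\ell_f L_g + L_f\ell_g^2$ and $\Phi=f\circ g + h$. For any $x\in\operatorname{dom}h$, $\tilde g\in\mathbb{R}^m$, $\tilde J\in\mathbb{R}^{m\times n}$, $M>0$, the point $x_+=\operatorname{argmin}_y\{f(\tilde g+\tilde J(y-x))+h(y)+\frac{M}{2}\|y-x\|^2\}$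 satisfies $\Phi(x_+)\le\Phi(x)-\frac{M-2L_{f\circ g}}{2}\|x_+-x\|^2 + L_f\|\tilde g - g(x)\|^2 + \frac{\ell_f}{2L_g}\|\tilde J - g'(x)\|^2$. -/
open Filter Set Topology intervalIntegral

/-- Quadratic Taylor bound with the sharp factor `L/2` for a function with
`L`-Lipschitz derivative. -/
lemma taylor_half {E F : Type*} [NormedAddCommGroup E] [NormedSpace ℝ E]
    [NormedAddCommGroup F] [NormedSpace ℝ F] [CompleteSpace F]
    (φ : E → F) (φ' : E → E →L[ℝ] F) (L : ℝ) (hL : 0 ≤ L)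
    (hφ : ∀ z, HasFDerivAt φ (φ' z) z)
    (hlip : ∀ a b, ‖φ' a - φ' b‖ ≤ L * ‖a - b‖)
    (p w : E) : ‖φ (p + w) - φ p - φ' p w‖ ≤ L / 2 * ‖w‖ ^ 2 := by
  set ψ : ℝ → F := fun t => φ (p + t • w) - t • φ' p w with hψ
  set D : ℝ → F := fun t => φ' (p + t • w) w - φ' p w with hD
  have hderiv : ∀ t : ℝ, HasDerivAt ψ (D t) t := by
    intro t
    have h1 : HasDerivAt (fun s : ℝ => p + s • w) w t := by
      simpa using ((hasDerivAt_id t).smul_const w).const_add p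
    have h2 : HasDerivAt (fun s : ℝ => φ (p + s • w)) (φ' (p + t • w) w) t :=
      (hφ (p + t • w)).comp_hasDerivAt t h1
    have h3 := h2.sub ((hasDerivAt_id t).smul_const (φ' p w))
    simp only [one_smul] at h3
    exact h3
  have hφ'cont : Continuous φ' := by
    have : LipschitzWith (Real.toNNReal L) φ' := by
      apply LipschitzWith.of_dist_le_mul
      intro a b
      rw [dist_eq_norm, dist_eq_norm, Real.coe_toNNReal L hL]
      exact hlip a b
    exact this.continuous
  have hDcont : Continuous D := by
    apply Continuous.sub _ continuous_const
    exact (hφ'cont.comp (by continuity)).clm_apply continuous_const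
  have key : ∫ t in (0:ℝ)..1, D t = ψ 1 - ψ 0 :=
    integral_eq_sub_of_hasDerivAt (fun t _ => hderiv t) (hDcont.intervalIntegrable 0 1)
  have hval : ψ 1 - ψ 0 = φ (p + w) - φ p - φ' p w := by
    simp only [hψ, one_smul, zero_smul, sub_zero]
    abel
  have hpt : ∀ t ∈ Set.Icc (0:ℝ) 1, ‖D t‖ ≤ L * ‖w‖ ^ 2 * t := by
    intro t ht
    have h1 : D t = (φ' (p + t • w) - φ' p) w := by simp [hD]
    rw [h1]
    calc ‖(φ' (p + t • w) - φ' p) w‖ ≤ ‖φ' (p + t • w) - φ' p‖ * ‖w‖ :=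
          (φ' (p + t • w) - φ' p).le_opNorm w
      _ ≤ (L * ‖(p + t • w) - p‖) * ‖w‖ := by
          exact mul_le_mul_of_nonneg_right (hlip _ _) (norm_nonneg w)
      _ = L * ‖w‖ ^ 2 * t := by
          rw [add_sub_cancel_left, norm_smul, Real.norm_eq_abs, abs_of_nonneg ht.1]
          ring
  have hbound : ‖∫ t in (0:ℝ)..1, D t‖ ≤ L / 2 * ‖w‖ ^ 2 := by
    calc ‖∫ t in (0:ℝ)..1, D t‖ ≤ ∫ t in (0:ℝ)..1, ‖D t‖ :=
          norm_integral_le_integral_norm zero_le_one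
      _ ≤ ∫ t in (0:ℝ)..1, L * ‖w‖ ^ 2 * t := by
          apply integral_mono_on zero_le_one
            (hDcont.norm.intervalIntegrable 0 1)
            (by apply Continuous.intervalIntegrable; continuity) hpt
      _ = L / 2 * ‖w‖ ^ 2 := by
          rw [integral_const_mul, integral_id]; ring
  rw [key, hval] at hbound
  exact hbound

/-- First-order condition for a convex differentiable function. -/
lemma convex_grad_ineq {E : Type*} [NormedAddCommGroup E] [NormedSpace ℝ E]
    (f : E → ℝ) (f' : E → E →L[ℝ] ℝ)
    (hconv : ConvexOn ℝ Set.univ f) (hf' : ∀ z, HasFDerivAt f (f' z) z)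
    (p q : E) : f p + f' p (q - p) ≤ f q := by
  have hd : HasDerivAt (fun t : ℝ => f (p + t • (q - p))) (f' p (q - p)) 0 := by
    have h1 : HasDerivAt (fun s : ℝ => p + s • (q - p)) (q - p) 0 := by
      simpa using ((hasDerivAt_id (0:ℝ)).smul_const (q - p)).const_add p
    have h2 := (hf' (p + (0:ℝ) • (q - p))).comp_hasDerivAt 0 h1
    have h3 : p + (0:ℝ) • (q - p) = p := by simp
    rw [h3] at h2
    exact h2
  have hslope := hasDerivAt_iff_tendsto_slope.1 hd
  have hkey : ∀ t ∈ Set.Ioc (0:ℝ) 1,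
      slope (fun t : ℝ => f (p + t • (q - p))) 0 t ≤ f q - f p := by
    intro t ht
    have hcx := hconv.2 (Set.mem_univ p) (Set.mem_univ q)
      (show (0:ℝ) ≤ 1 - t by linarith [ht.2]) (le_of_lt ht.1)
      (show (1 - t) + t = 1 by ring)
    have heq : (1 - t) • p + t • q = p + t • (q - p) := by module
    rw [heq] at hcx
    rw [slope_def_field]
    rw [div_le_iff₀ (by simpa using ht.1)]
    simp only [zero_smul, add_zero]
    simp only [smul_eq_mul] at hcx
    nlinarith [hcx]
  have hle : f' p (q - p) ≤ f q - f p := by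
    have hmono : 𝓝[>] (0:ℝ) ≤ 𝓝[≠] (0:ℝ) :=
      nhdsWithin_mono 0 (fun t ht => ne_of_gt ht)
    apply le_of_tendsto (hslope.mono_left hmono)
    filter_upwards [Ioc_mem_nhdsGT zero_lt_one] with t ht using hkey t ht
  linarith



set_option maxHeartbeats 1000000 in


/-- Smooth descent lemma for the inexact prox-linear step: with
`L_{f∘g} = ℓf Lg + Lf ℓg²` and `Φ = f ∘ g + h`, the minimizer `xplus` of the
approximate prox-linear subproblem satisfies
`Φ(xplus) ≤ Φ(x) - (M - 2L_{f∘g})/2 ‖xplus - x‖² + Lf‖tg - g(x)‖²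
+ (ℓf/(2Lg))‖tJ - g'(x)‖²`. -/
theorem stmt14 {n m : ℕ}
    (f : EuclideanSpace ℝ (Fin m) → ℝ)
    (f' : EuclideanSpace ℝ (Fin m) → (EuclideanSpace ℝ (Fin m) →L[ℝ] ℝ))
    (f'' : EuclideanSpace ℝ (Fin m) →
      (EuclideanSpace ℝ (Fin m) →L[ℝ] (EuclideanSpace ℝ (Fin m) →L[ℝ] ℝ)))
    (ℓf Lf ℓg Lg M : ℝ)
    (hℓf : 0 ≤ ℓf) (hLf : 0 ≤ Lf) (hℓg : 0 ≤ ℓg) (hLg : 0 < Lg) (hM : 0 < M)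
    (hfconv : ConvexOn ℝ Set.univ f)
    (hfLip : ∀ u v, |f u - f v| ≤ ℓf * ‖u - v‖)
    (hf' : ∀ z, HasFDerivAt f (f' z) z)
    (hf'' : ∀ z, HasFDerivAt f' (f'' z) z)
    (hf''bd : ∀ z, ‖f'' z‖ ≤ Lf)
    (g : EuclideanSpace ℝ (Fin n) → EuclideanSpace ℝ (Fin m))
    (g' : EuclideanSpace ℝ (Fin n) →
      (EuclideanSpace ℝ (Fin n) →L[ℝ] EuclideanSpace ℝ (Fin m)))
    (hg : ∀ u, HasFDerivAt g (g' u) u)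
    (hg'bd : ∀ u, ‖g' u‖ ≤ ℓg)
    (hg' : ∀ u v, ‖g' u - g' v‖ ≤ Lg * ‖u - v‖)
    (h : EuclideanSpace ℝ (Fin n) → EReal)
    (hconv : ∀ a b : EuclideanSpace ℝ (Fin n), ∀ t : ℝ, 0 ≤ t → t ≤ 1 →
      h (t • a + (1 - t) • b) ≤ ((t : ℝ) : EReal) * h a + (((1 - t : ℝ)) : EReal) * h b)
    (hlsc : LowerSemicontinuous h)
    (hproper : ∀ y, h y ≠ ⊥)
    (x : EuclideanSpace ℝ (Fin n)) (hx : h x ≠ ⊤)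
    (tg : EuclideanSpace ℝ (Fin m))
    (tJ : EuclideanSpace ℝ (Fin n) →L[ℝ] EuclideanSpace ℝ (Fin m))
    (xplus : EuclideanSpace ℝ (Fin n))
    (hmin : ∀ y,
      ((f (tg + tJ (xplus - x)) + M / 2 * ‖xplus - x‖ ^ 2 : ℝ) : EReal) + h xplus ≤
      ((f (tg + tJ (y - x)) + M / 2 * ‖y - x‖ ^ 2 : ℝ) : EReal) + h y) :
    ((f (g xplus) : ℝ) : EReal) + h xplus ≤
      ((f (g x) : ℝ) : EReal) + h x +
      ((Lf * ‖tg - g x‖ ^ 2 + ℓf / (2 * Lg) * ‖tJ - g' x‖ ^ 2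
        - (M - 2 * (ℓf * Lg + Lf * ℓg ^ 2)) / 2 * ‖xplus - x‖ ^ 2 : ℝ) : EReal) := by
    -- Lipschitz bound on f'
  have hf'lip : ∀ a b, ‖f' a - f' b‖ ≤ Lf * ‖a - b‖ := fun a b =>
    convex_univ.norm_image_sub_le_of_norm_hasFDerivWithin_le
      (fun z _ => (hf'' z).hasFDerivWithinAt) (fun z _ => hf''bd z)
      (Set.mem_univ b) (Set.mem_univ a)
  -- bound on f'
  have hflip : LipschitzWith (Real.toNNReal ℓf) f := by
    apply LipschitzWith.of_dist_le_mul
    intro u v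
    rw [Real.dist_eq, dist_eq_norm, Real.coe_toNNReal ℓf hℓf]
    exact hfLip u v
  have hf'bd : ∀ z, ‖f' z‖ ≤ ℓf := by
    intro z
    have := (hf' z).le_of_lipschitz hflip
    rwa [Real.coe_toNNReal ℓf hℓf] at this
  have hgrad : ∀ p q, f p + f' p (q - p) ≤ f q := convex_grad_ineq f f' hfconv hf'
  have hxp : x + (xplus - x) = xplus := by abel
  have htg : ‖g xplus - g x - g' x (xplus - x)‖ ≤ Lg / 2 * ‖xplus - x‖ ^ 2 := by
    have := taylor_half g g' Lg hLg.le hg hg' x (xplus - x)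
    rwa [hxp] at this
  have hu : ‖g' x (xplus - x)‖ ≤ ℓg * ‖xplus - x‖ :=
    le_trans ((g' x).le_opNorm _)
      (mul_le_mul_of_nonneg_right (hg'bd x) (norm_nonneg _))
  -- e1
  have e1 : f (g xplus) - f (g x + g' x (xplus - x)) ≤ ℓf * (Lg / 2 * ‖xplus - x‖ ^ 2) := by
    have h1 := hfLip (g xplus) (g x + g' x (xplus - x))
    have h2 : ‖g xplus - (g x + g' x (xplus - x))‖ ≤ Lg / 2 * ‖xplus - x‖ ^ 2 := by
      rw [sub_add_eq_sub_sub]; exact htg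
    exact le_trans (le_abs_self _)
      (h1.trans (mul_le_mul_of_nonneg_left h2 hℓf))
  -- e2
  have e2 : f (g x + g' x (xplus - x)) - f (g x) ≤
      f' (g x) (g' x (xplus - x)) + Lf / 2 * (ℓg * ‖xplus - x‖) ^ 2 := by
    have h1 := taylor_half f f' Lf hLf hf' hf'lip (g x) (g' x (xplus - x))
    rw [Real.norm_eq_abs] at h1
    have h2 : Lf / 2 * ‖g' x (xplus - x)‖ ^ 2 ≤ Lf / 2 * (ℓg * ‖xplus - x‖) ^ 2 := by
      apply mul_le_mul_of_nonneg_left _ (by positivity)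
      exact pow_le_pow_left₀ (norm_nonneg _) hu 2
    have h3 := le_trans (le_abs_self _) h1
    linarith
  -- e3
  have e3 : f tg - f (tg + tJ (xplus - x)) ≤ - f' tg (tJ (xplus - x)) := by
    have h1 := hgrad tg (tg + tJ (xplus - x))
    rw [add_sub_cancel_left] at h1
    linarith
  -- e4
  have e4 : f' (g x) (g' x (xplus - x)) - f' tg (g' x (xplus - x)) ≤
      Lf * ‖tg - g x‖ * (ℓg * ‖xplus - x‖) := by
    have h1 : f' (g x) (g' x (xplus - x)) - f' tg (g' x (xplus - x))
        = (f' (g x) - f' tg) (g' x (xplus - x)) := by simp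
    rw [h1]
    calc (f' (g x) - f' tg) (g' x (xplus - x))
        ≤ ‖f' (g x) - f' tg‖ * ‖g' x (xplus - x)‖ := by
          exact le_trans (le_abs_self _)
            (by rw [← Real.norm_eq_abs]; exact (f' (g x) - f' tg).le_opNorm _)
      _ ≤ (Lf * ‖tg - g x‖) * (ℓg * ‖xplus - x‖) := by
          apply mul_le_mul _ hu (norm_nonneg _) (by positivity)
          rw [show ‖tg - g x‖ = ‖g x - tg‖ from norm_sub_rev _ _]
          exact hf'lip _ _
      _ = Lf * ‖tg - g x‖ * (ℓg * ‖xplus - x‖) := by ring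
  -- e5
  have e5 : f' tg (g' x (xplus - x)) - f' tg (tJ (xplus - x)) ≤
      ℓf * (‖tJ - g' x‖ * ‖xplus - x‖) := by
    have h1 : f' tg (g' x (xplus - x)) - f' tg (tJ (xplus - x))
        = f' tg ((g' x - tJ) (xplus - x)) := by simp
    rw [h1]
    calc f' tg ((g' x - tJ) (xplus - x))
        ≤ ‖f' tg‖ * ‖(g' x - tJ) (xplus - x)‖ := by
          exact le_trans (le_abs_self _)
            (by rw [← Real.norm_eq_abs]; exact (f' tg).le_opNorm _)
      _ ≤ ℓf * (‖tJ - g' x‖ * ‖xplus - x‖) := by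
          apply mul_le_mul (hf'bd tg) _ (norm_nonneg _) hℓf
          rw [show ‖tJ - g' x‖ = ‖g' x - tJ‖ from norm_sub_rev _ _]
          exact (g' x - tJ).le_opNorm _
  -- Young inequalities
  have y1 : Lf * ‖tg - g x‖ * (ℓg * ‖xplus - x‖) ≤
      Lf * ‖tg - g x‖ ^ 2 + Lf * ℓg ^ 2 / 4 * ‖xplus - x‖ ^ 2 := by
    nlinarith [mul_nonneg hLf (sq_nonneg (‖tg - g x‖ - ℓg * ‖xplus - x‖ / 2))]
  have y2 : ℓf * (‖tJ - g' x‖ * ‖xplus - x‖) ≤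
      ℓf / (2 * Lg) * ‖tJ - g' x‖ ^ 2 + ℓf * Lg / 2 * ‖xplus - x‖ ^ 2 := by
    have h1 : ‖tJ - g' x‖ * ‖xplus - x‖ ≤
        1 / (2 * Lg) * ‖tJ - g' x‖ ^ 2 + Lg / 2 * ‖xplus - x‖ ^ 2 := by
      rw [← sub_nonneg]
      have key : 1 / (2 * Lg) * ‖tJ - g' x‖ ^ 2 + Lg / 2 * ‖xplus - x‖ ^ 2
          - ‖tJ - g' x‖ * ‖xplus - x‖
          = (‖tJ - g' x‖ - Lg * ‖xplus - x‖) ^ 2 / (2 * Lg) := by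
        field_simp
        ring
      rw [key]
      positivity
    have h2 := mul_le_mul_of_nonneg_left h1 hℓf
    have key2 : ℓf * (1 / (2 * Lg) * ‖tJ - g' x‖ ^ 2 + Lg / 2 * ‖xplus - x‖ ^ 2)
        = ℓf / (2 * Lg) * ‖tJ - g' x‖ ^ 2 + ℓf * Lg / 2 * ‖xplus - x‖ ^ 2 := by
      field_simp
    linarith [key2 ▸ h2]
  -- the minimality at y = x, in real form
  have hmx := hmin x
  simp only [sub_self, map_zero, add_zero, norm_zero, ne_eq, OfNat.ofNat_ne_zero,
    not_false_eq_true, zero_pow, mul_zero] at hmx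
  have ha : h x = (((h x).toReal : ℝ) : EReal) := (EReal.coe_toReal hx (hproper x)).symm
  have hxpne : h xplus ≠ ⊤ := by
    intro hT
    rw [hT, ha] at hmx
    rw [EReal.add_top_iff_ne_bot.2 (EReal.coe_ne_bot _), ← EReal.coe_add] at hmx
    exact EReal.coe_ne_top _ (top_le_iff.1 hmx)
  have hb : h xplus = (((h xplus).toReal : ℝ) : EReal) :=
    (EReal.coe_toReal hxpne (hproper xplus)).symm
  rw [ha, hb, ← EReal.coe_add, ← EReal.coe_add, EReal.coe_le_coe_iff] at hmx
  rw [ha, hb, ← EReal.coe_add, ← EReal.coe_add, ← EReal.coe_add, EReal.coe_le_coe_iff]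
  nlinarith [e1, e2, e3, e4, e5, y1, y2, hmx,
    mul_nonneg (mul_nonneg hLf (sq_nonneg ℓg)) (sq_nonneg ‖xplus - x‖)]
end

section
/- (Gradient-mapping comparison, smooth case.) Under the assumptions of the smooth descent lemma, with $\hat x_+ = \operatorname{argmin}_y\{f(g(x)+g'(x)(y-x))+h(y)+\frac{M}{2}\|y-x\|^2\}$, $x_+$ as before, $\mathcal{G}(x)=M(x-\hat x_+)$, $\widetilde{\mathcal{G}}(x)=M(x-x_+)$, and $M>L_{f\circ g}$: $\frac{M-L_{f\circ g}}{M^2}\|\mathcal{G}(x)\|^2 \le \frac{2M+L_{f\circ g}}{M^2}\|\widetilde{\mathcal{G}}(x)\|^2 + 3L_f\|\tilde g-g(x)\|^2 + \frac{2\ell_f}{L_g}\|\tilde J-g'(x)\|^2$. -/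
open Set Filter Topology
open scoped RealInnerProductSpace

section helpers1


variable {F : Type*} [NormedAddCommGroup F] [InnerProductSpace ℝ F] [CompleteSpace F]

lemma my_dirDeriv (f : F → ℝ) (gz : F) (z v : F) (hf : HasGradientAt f gz z) :
    HasDerivAt (fun t : ℝ => f (z + t • v)) ⟪gz, v⟫ 0 := by
  have hc : HasDerivAt (fun t : ℝ => z + t • v) v 0 := by
    simpa using ((hasDerivAt_id (0:ℝ)).smul_const v).const_add z
  have hz : z + (0:ℝ) • v = z := by simp
  have hl : HasFDerivAt f (InnerProductSpace.toDual ℝ F gz) (z + (0:ℝ) • v) := by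
    rw [hz]; exact hf.hasFDerivAt
  have := hl.comp_hasDerivAt 0 hc
  simpa [Function.comp_def, InnerProductSpace.toDual_apply_apply] using this

lemma my_deriv_le_of_slope {φ : ℝ → ℝ} {D C : ℝ} (hd : HasDerivAt φ D 0)
    (hb : ∀ t : ℝ, 0 < t → t < 1 → φ t ≤ φ 0 + t * C) : D ≤ C := by
  have htend : Tendsto (slope φ 0) (𝓝[>] (0:ℝ)) (𝓝 D) :=
    (hasDerivAt_iff_tendsto_slope.1 hd).mono_left
      (nhdsWithin_mono _ (fun t ht => ne_of_gt ht))
  refine le_of_tendsto htend ?_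
  filter_upwards [Ioo_mem_nhdsGT_of_mem (show (0:ℝ) ∈ Ico (0:ℝ) 1 by norm_num)] with t ht
  have h1 := hb t ht.1 ht.2
  rw [slope_def_field]
  rw [div_le_iff₀ (by simpa using ht.1)]
  simp only [sub_zero]
  nlinarith [ht.1, h1]

/-- gradient of a Lipschitz function is bounded -/
lemma my_grad_bound (f : F → ℝ) (gz : F) (z : F) (ℓf : ℝ) (hℓf : 0 ≤ ℓf)
    (hf : HasGradientAt f gz z) (hLip : ∀ u v, |f u - f v| ≤ ℓf * ‖u - v‖) :
    ‖gz‖ ≤ ℓf := by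
  have h1 : ⟪gz, gz⟫ ≤ ℓf * ‖gz‖ := by
    refine my_deriv_le_of_slope (my_dirDeriv f gz z gz hf) (fun t ht ht1 => ?_)
    have := hLip (z + t • gz) z
    have habs : f (z + t • gz) - f z ≤ ℓf * ‖t • gz‖ := by
      calc f (z + t • gz) - f z ≤ |f (z + t • gz) - f z| := le_abs_self _
      _ ≤ ℓf * ‖(z + t • gz) - z‖ := hLip _ _
      _ = ℓf * ‖t • gz‖ := by rw [add_sub_cancel_left]
    rw [norm_smul, Real.norm_eq_abs, abs_of_pos ht] at habs
    show f (z + t • gz) ≤ f (z + (0:ℝ) • gz) + t * (ℓf * ‖gz‖)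
    rw [zero_smul, add_zero]
    nlinarith [habs]
  have h2 : ‖gz‖ ^ 2 ≤ ℓf * ‖gz‖ := by
    rwa [real_inner_self_eq_norm_sq] at h1
  rcases eq_or_lt_of_le (norm_nonneg gz) with h | h
  · rw [← h]; exact hℓf
  · nlinarith [h2, h]

/-- convexity gradient inequality -/
lemma my_convex_grad (f : F → ℝ) (gv : F) (u v : F)
    (hfconv : ConvexOn ℝ Set.univ f) (hf : HasGradientAt f gv v) :
    f v + ⟪gv, u - v⟫ ≤ f u := by
  have h1 : ⟪gv, u - v⟫ ≤ f u - f v := by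
    refine my_deriv_le_of_slope (my_dirDeriv f gv v (u - v) hf) (fun t ht ht1 => ?_)
    have hpt : v + t • (u - v) = t • u + (1 - t) • v := by module
    have := hfconv.2 (Set.mem_univ u) (Set.mem_univ v) (le_of_lt ht)
      (by linarith : (0:ℝ) ≤ 1 - t) (by ring)
    rw [hpt]
    calc f (t • u + (1 - t) • v) ≤ t * f u + (1 - t) * f v := this
    _ = f v + t * (f u - f v) := by ring
    _ = (fun s : ℝ => f (v + s • (u - v))) 0 + t * (f u - f v) := by norm_num
  linarith

/-- descent lemma (weak constant) -/
lemma my_descent (f : F → ℝ) (f'f : F → F) (Lf : ℝ) (hLf : 0 ≤ Lf)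
    (hf' : ∀ z, HasGradientAt f (f'f z) z)
    (hf'L : ∀ u v, ‖f'f u - f'f v‖ ≤ Lf * ‖u - v‖) (u v : F) :
    f u ≤ f v + ⟪f'f v, u - v⟫ + Lf * ‖u - v‖ ^ 2 := by
  have key : ‖f u - f v - (InnerProductSpace.toDual ℝ F (f'f v)) (u - v)‖
      ≤ (Lf * ‖u - v‖) * ‖u - v‖ := by
    refine Convex.norm_image_sub_le_of_norm_hasFDerivWithin_le'
      (f' := fun w => InnerProductSpace.toDual ℝ F (f'f w))
      (fun w _ => (hf' w).hasFDerivAt.hasFDerivWithinAt) (fun w hw => ?_)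
      (convex_segment v u) (left_mem_segment ℝ v u) (right_mem_segment ℝ v u)
    obtain ⟨p, q, hp, hq, hpq, rfl⟩ := hw
    have hseg : p • v + q • u - v = q • (u - v) := by
      have hp' : p = 1 - q := by linarith
      rw [hp']; module
    have h1 : ‖InnerProductSpace.toDual ℝ F (f'f (p • v + q • u))
        - InnerProductSpace.toDual ℝ F (f'f v)‖ = ‖f'f (p • v + q • u) - f'f v‖ := by
      rw [← map_sub]; exact (InnerProductSpace.toDual ℝ F).norm_map _
    rw [h1]
    calc ‖f'f (p • v + q • u) - f'f v‖ ≤ Lf * ‖p • v + q • u - v‖ := hf'L _ _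
    _ = Lf * (q * ‖u - v‖) := by
        rw [hseg, norm_smul, Real.norm_eq_abs, abs_of_nonneg hq]
    _ ≤ Lf * ‖u - v‖ := by
        nlinarith [mul_nonneg (mul_nonneg hLf (by linarith : (0:ℝ) ≤ 1 - q))
          (norm_nonneg (u - v))]
  have key2 : |f u - f v - ⟪f'f v, u - v⟫| ≤ Lf * ‖u - v‖ * ‖u - v‖ := by
    rw [← Real.norm_eq_abs, ← InnerProductSpace.toDual_apply_apply]; exact key
  have h2 := (le_abs_self (f u - f v - ⟪f'f v, u - v⟫)).trans key2
  nlinarith [h2]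
end helpers1

section helpers2


variable {N : Type*} [NormedAddCommGroup N] [InnerProductSpace ℝ N]

lemma my_quad_id (u v : N) (t : ℝ) :
    ‖t • u + (1 - t) • v‖ ^ 2
      = t * ‖u‖ ^ 2 + (1 - t) * ‖v‖ ^ 2 - t * (1 - t) * ‖u - v‖ ^ 2 := by
  have h : ∀ w : N, ‖w‖ ^ 2 = ⟪w, w⟫ := fun w => (real_inner_self_eq_norm_sq w).symm
  rw [h, h, h, h]
  simp only [inner_add_left, inner_add_right, inner_smul_left, inner_smul_right,
    inner_sub_left, inner_sub_right, RCLike.conj_to_real, real_inner_comm v u]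
  ring

lemma my_ne_top_of_add_le {a b : ℝ} {u w : EReal} (hw : w ≠ ⊤)
    (hle : (a : EReal) + u ≤ (b : EReal) + w) : u ≠ ⊤ := by
  intro h
  rw [h] at hle
  have h1 : (a : EReal) + ⊤ = ⊤ := EReal.add_top_of_ne_bot (by simp)
  rw [h1] at hle
  exact absurd (lt_of_le_of_lt hle (EReal.add_lt_top (by simp) hw)) (lt_irrefl _)

lemma my_strong_min (φ : N → ℝ)
    (hφ : ∀ p q : N, ∀ t : ℝ, 0 ≤ t → t ≤ 1 →
      φ (t • p + (1 - t) • q) ≤ t * φ p + (1 - t) * φ q)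
    (M : ℝ) (hM : 0 < M)
    (h : N → EReal)
    (hconv : ∀ a b : N, ∀ t : ℝ, 0 ≤ t → t ≤ 1 →
      h (t • a + (1 - t) • b) ≤ ((t : ℝ) : EReal) * h a + (((1 - t : ℝ)) : EReal) * h b)
    (hproper : ∀ y, h y ≠ ⊥)
    (x xs : N)
    (hmin : ∀ y, ((φ xs + M / 2 * ‖xs - x‖ ^ 2 : ℝ) : EReal) + h xs ≤
      ((φ y + M / 2 * ‖y - x‖ ^ 2 : ℝ) : EReal) + h y)
    (hsT : h xs ≠ ⊤)
    (y : N) (hyT : h y ≠ ⊤) :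
    φ xs + M / 2 * ‖xs - x‖ ^ 2 + (h xs).toReal + M / 2 * ‖y - xs‖ ^ 2 ≤
      φ y + M / 2 * ‖y - x‖ ^ 2 + (h y).toReal := by
  set Hy := (h y).toReal with hHy
  set Hs := (h xs).toReal with hHs
  have hyc : ((Hy : ℝ) : EReal) = h y := EReal.coe_toReal hyT (hproper y)
  have hsc : ((Hs : ℝ) : EReal) = h xs := EReal.coe_toReal hsT (hproper xs)
  have key : ∀ t : ℝ, 0 < t → t < 1 → M / 2 * (1 - t) * ‖y - xs‖ ^ 2 ≤
      (φ y + M / 2 * ‖y - x‖ ^ 2 + Hy) - (φ xs + M / 2 * ‖xs - x‖ ^ 2 + Hs) := by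
    intro t ht ht1
    set z := t • y + (1 - t) • xs with hz
    have hzb : h z ≤ ((t * Hy + (1 - t) * Hs : ℝ) : EReal) := by
      have h1 := hconv y xs t ht.le ht1.le
      rw [← hyc, ← hsc, ← EReal.coe_mul, ← EReal.coe_mul, ← EReal.coe_add] at h1
      exact h1
    have hzT : h z ≠ ⊤ := by
      intro hh; rw [hh, top_le_iff] at hzb; exact EReal.coe_ne_top _ hzb
    have hzR : (h z).toReal ≤ t * Hy + (1 - t) * Hs := by
      have := EReal.toReal_le_toReal hzb (hproper z) (EReal.coe_ne_top _)
      rwa [EReal.toReal_coe] at this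
    have hminz : φ xs + M / 2 * ‖xs - x‖ ^ 2 + Hs ≤
        φ z + M / 2 * ‖z - x‖ ^ 2 + (h z).toReal := by
      have h0 := hmin z
      rw [← hsc, ← EReal.coe_toReal hzT (hproper z), ← EReal.coe_add, ← EReal.coe_add,
        EReal.coe_le_coe_iff] at h0
      linarith [h0]
    have hφz : φ z ≤ t * φ y + (1 - t) * φ xs := hφ y xs t ht.le ht1.le
    have hq : ‖z - x‖ ^ 2 = t * ‖y - x‖ ^ 2 + (1 - t) * ‖xs - x‖ ^ 2
        - t * (1 - t) * ‖y - xs‖ ^ 2 := by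
      have hzx : z - x = t • (y - x) + (1 - t) • (xs - x) := by rw [hz]; module
      have hyx : (y - x) - (xs - x) = y - xs := by abel
      rw [hzx, my_quad_id, hyx]
    rw [hq] at hminz
    have hcomb : M / 2 * (t * (1 - t)) * ‖y - xs‖ ^ 2 ≤
        t * ((φ y + M / 2 * ‖y - x‖ ^ 2 + Hy) - (φ xs + M / 2 * ‖xs - x‖ ^ 2 + Hs)) := by
      nlinarith [hminz, hφz, hzR]
    nlinarith [hcomb, ht]
  have htend : Tendsto (fun t : ℝ => M / 2 * (1 - t) * ‖y - xs‖ ^ 2) (𝓝[>] (0:ℝ))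
      (𝓝 (M / 2 * ‖y - xs‖ ^ 2)) := by
    have hcont : ContinuousAt (fun t : ℝ => M / 2 * (1 - t) * ‖y - xs‖ ^ 2) 0 := by fun_prop
    have := hcont.tendsto.mono_left (nhdsWithin_le_nhds (s := Ioi (0:ℝ)))
    simpa using this
  have hlim : M / 2 * ‖y - xs‖ ^ 2 ≤
      (φ y + M / 2 * ‖y - x‖ ^ 2 + Hy) - (φ xs + M / 2 * ‖xs - x‖ ^ 2 + Hs) := by
    refine le_of_tendsto htend ?_
    filter_upwards [Ioo_mem_nhdsGT_of_mem (show (0:ℝ) ∈ Ico (0:ℝ) 1 by norm_num)] with t ht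
    exact key t ht.1 ht.2
  linarith [hlim]
end helpers2


set_option maxHeartbeats 1000000 in
lemma my_scalar (ℓf Lf ℓg Lg M a b d E J : ℝ)
    (hℓf : 0 ≤ ℓf) (hLf : 0 ≤ Lf) (hℓg : 0 ≤ ℓg) (hLg : 0 < Lg)
    (hM : ℓf * Lg + Lf * ℓg ^ 2 < M)
    (ha0 : 0 ≤ a) (hb0 : 0 ≤ b) (hd0 : 0 ≤ d) (hE0 : 0 ≤ E) (hJ0 : 0 ≤ J)
    (key : M * d ^ 2 ≤ Lf * ℓg * d * E + Lf * E ^ 2 + ℓf * (J * a) + ℓf * (J * b))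
    (htri : a ≤ d + b) :
    (M - (ℓf * Lg + Lf * ℓg ^ 2)) * a ^ 2 ≤
      (2 * M + (ℓf * Lg + Lf * ℓg ^ 2)) * b ^ 2 + 3 * Lf * E ^ 2 + 2 * ℓf / Lg * J ^ 2 := by
  have hMpos : 0 < M := lt_of_le_of_lt (by positivity) hM
  have step2 : ℓf * (J * a) + ℓf * (J * b) ≤ ℓf * J * (d + 2 * b) := by
    nlinarith [mul_nonneg hℓf hJ0, htri]
  have key2 : M * d ^ 2 ≤ Lf * ℓg * d * E + Lf * E ^ 2 + ℓf * J * (d + 2 * b) := by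
    linarith [key, step2]
  have keyL : 2 * Lg * (M * d ^ 2) ≤
      2 * Lg * (Lf * ℓg * d * E + Lf * E ^ 2 + ℓf * J * (d + 2 * b)) :=
    mul_le_mul_of_nonneg_left key2 (by positivity)
  have g1 : 2 * (Lf * ℓg * d * E) ≤ Lf * E ^ 2 + Lf * ℓg ^ 2 * d ^ 2 := by
    nlinarith [sq_nonneg (E - ℓg * d), hLf]
  have g1L : Lg * (2 * (Lf * ℓg * d * E)) ≤ Lg * (Lf * E ^ 2 + Lf * ℓg ^ 2 * d ^ 2) :=
    mul_le_mul_of_nonneg_left g1 hLg.le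
  have g2 : 2 * (ℓf * J * (d + 2 * b)) * Lg ≤
      2 * ℓf * J ^ 2 + ℓf * Lg ^ 2 / 2 * (2 * b + d) ^ 2 := by
    nlinarith [sq_nonneg (2 * J - Lg * (2 * b + d)), hℓf]
  have h4 : 2 * Lg * M * d ^ 2 ≤ Lg * Lf * ℓg ^ 2 * d ^ 2 + 3 * Lg * Lf * E ^ 2
      + 2 * ℓf * J ^ 2 + ℓf * Lg ^ 2 / 2 * (2 * b + d) ^ 2 := by
    linarith [keyL, g1L, g2]
  have hP0 : 0 ≤ ℓf * Lg := by positivity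
  have hQ0 : 0 ≤ Lf * ℓg ^ 2 := by positivity
  have hQM : Lf * ℓg ^ 2 ≤ M := by nlinarith [hM, hP0]
  have hW : 0 ≤ (M + 2 * (Lf * ℓg ^ 2)) * b ^ 2 - 2 * (M - Lf * ℓg ^ 2) * b * d
      + (M + ℓf * Lg / 2) * d ^ 2 := by
    have h1 := sq_nonneg ((M + 2 * (Lf * ℓg ^ 2)) * b - (M - Lf * ℓg ^ 2) * d)
    have h5 : (Lf * ℓg ^ 2) * (Lf * ℓg ^ 2) ≤ (Lf * ℓg ^ 2) * M :=
      mul_le_mul_of_nonneg_left hQM hQ0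
    have hc : 0 ≤ M * (ℓf * Lg) / 2 + 4 * M * (Lf * ℓg ^ 2)
        + (ℓf * Lg) * (Lf * ℓg ^ 2) - (Lf * ℓg ^ 2) ^ 2 := by
      nlinarith [h5, mul_nonneg hMpos.le hP0, mul_nonneg hP0 hQ0, mul_nonneg hQ0 hMpos.le]
    have h2 : 0 ≤ (M * (ℓf * Lg) / 2 + 4 * M * (Lf * ℓg ^ 2)
        + (ℓf * Lg) * (Lf * ℓg ^ 2) - (Lf * ℓg ^ 2) ^ 2) * d ^ 2 :=
      mul_nonneg hc (sq_nonneg d)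
    have hM2Q : 0 < M + 2 * (Lf * ℓg ^ 2) := by linarith
    have h3 : 0 ≤ (M + 2 * (Lf * ℓg ^ 2)) *
        ((M + 2 * (Lf * ℓg ^ 2)) * b ^ 2 - 2 * (M - Lf * ℓg ^ 2) * b * d
          + (M + ℓf * Lg / 2) * d ^ 2) := by
      nlinarith [h1, h2]
    exact nonneg_of_mul_nonneg_right h3 hM2Q
  have haa : a ^ 2 ≤ (d + b) ^ 2 := by nlinarith [htri, ha0]
  have e1 : Lg * (M - (ℓf * Lg + Lf * ℓg ^ 2)) * a ^ 2 ≤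
      Lg * (M - (ℓf * Lg + Lf * ℓg ^ 2)) * (d + b) ^ 2 :=
    mul_le_mul_of_nonneg_left haa (by nlinarith [hLg.le, hM])
  have e3 : 0 ≤ Lg * ((M + 2 * (Lf * ℓg ^ 2)) * b ^ 2 - 2 * (M - Lf * ℓg ^ 2) * b * d
      + (M + ℓf * Lg / 2) * d ^ 2) :=
    mul_nonneg hLg.le hW
  have hfinal : Lg * ((M - (ℓf * Lg + Lf * ℓg ^ 2)) * a ^ 2) ≤
      Lg * ((2 * M + (ℓf * Lg + Lf * ℓg ^ 2)) * b ^ 2) + 3 * Lf * Lg * E ^ 2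
      + 2 * ℓf * J ^ 2 := by
    linarith [e1, h4, e3]
  rw [← mul_le_mul_iff_right₀ hLg]
  have hLgne : Lg ≠ 0 := ne_of_gt hLg
  have hid : Lg * ((2 * M + (ℓf * Lg + Lf * ℓg ^ 2)) * b ^ 2 + 3 * Lf * E ^ 2
      + 2 * ℓf / Lg * J ^ 2)
      = Lg * ((2 * M + (ℓf * Lg + Lf * ℓg ^ 2)) * b ^ 2) + 3 * Lf * Lg * E ^ 2
      + 2 * ℓf * J ^ 2 := by
    field_simp
  rw [hid]
  exact hfinal

set_option maxHeartbeats 1000000 in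
/-- Gradient-mapping comparison lemma (smooth case): with
`L_{f∘g} = ℓf Lg + Lf ℓg²`, `𝒢(x) = M(x - xhat)` and `𝒢̃(x) = M(x - xplus)` built
from the exact and approximate prox-linear subproblems,
`(M - L_{f∘g})/M² ‖𝒢(x)‖² ≤ (2M + L_{f∘g})/M² ‖𝒢̃(x)‖² + 3Lf‖tg - g(x)‖²
+ (2ℓf/Lg)‖tJ - g'(x)‖²`. -/
theorem stmt15 {n m : ℕ}
    (f : EuclideanSpace ℝ (Fin m) → ℝ)
    (f' : EuclideanSpace ℝ (Fin m) → EuclideanSpace ℝ (Fin m))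
    (ℓf Lf ℓg Lg M : ℝ)
    (hℓf : 0 ≤ ℓf) (hLf : 0 ≤ Lf) (hℓg : 0 ≤ ℓg) (hLg : 0 < Lg)
    (hM : ℓf * Lg + Lf * ℓg ^ 2 < M)
    (hfconv : ConvexOn ℝ Set.univ f)
    (hfLip : ∀ u v, |f u - f v| ≤ ℓf * ‖u - v‖)
    (hf' : ∀ z, HasGradientAt f (f' z) z)
    (hf'L : ∀ u v, ‖f' u - f' v‖ ≤ Lf * ‖u - v‖)
    (g : EuclideanSpace ℝ (Fin n) → EuclideanSpace ℝ (Fin m))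
    (g' : EuclideanSpace ℝ (Fin n) →
      (EuclideanSpace ℝ (Fin n) →L[ℝ] EuclideanSpace ℝ (Fin m)))
    (hg : ∀ u, HasFDerivAt g (g' u) u)
    (hg'bd : ∀ u, ‖g' u‖ ≤ ℓg)
    (hg' : ∀ u v, ‖g' u - g' v‖ ≤ Lg * ‖u - v‖)
    (h : EuclideanSpace ℝ (Fin n) → EReal)
    (hconv : ∀ a b : EuclideanSpace ℝ (Fin n), ∀ t : ℝ, 0 ≤ t → t ≤ 1 →
      h (t • a + (1 - t) • b) ≤ ((t : ℝ) : EReal) * h a + (((1 - t : ℝ)) : EReal) * h b)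
    (hlsc : LowerSemicontinuous h)
    (hproper : ∀ y, h y ≠ ⊥)
    (x : EuclideanSpace ℝ (Fin n)) (hx : h x ≠ ⊤)
    (tg : EuclideanSpace ℝ (Fin m))
    (tJ : EuclideanSpace ℝ (Fin n) →L[ℝ] EuclideanSpace ℝ (Fin m))
    (xhat xplus : EuclideanSpace ℝ (Fin n))
    (hmin1 : ∀ y,
      ((f (g x + g' x (xhat - x)) + M / 2 * ‖xhat - x‖ ^ 2 : ℝ) : EReal) + h xhat ≤
      ((f (g x + g' x (y - x)) + M / 2 * ‖y - x‖ ^ 2 : ℝ) : EReal) + h y)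
    (hmin2 : ∀ y,
      ((f (tg + tJ (xplus - x)) + M / 2 * ‖xplus - x‖ ^ 2 : ℝ) : EReal) + h xplus ≤
      ((f (tg + tJ (y - x)) + M / 2 * ‖y - x‖ ^ 2 : ℝ) : EReal) + h y) :
    (M - (ℓf * Lg + Lf * ℓg ^ 2)) / M ^ 2 * ‖M • (x - xhat)‖ ^ 2 ≤
      (2 * M + (ℓf * Lg + Lf * ℓg ^ 2)) / M ^ 2 * ‖M • (x - xplus)‖ ^ 2
      + 3 * Lf * ‖tg - g x‖ ^ 2 + 2 * ℓf / Lg * ‖tJ - g' x‖ ^ 2 := by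
  have hMpos : 0 < M := lt_of_le_of_lt (by positivity) hM
  -- convexity of the two linearized compositions
  have hφ1 : ∀ p q : EuclideanSpace ℝ (Fin n), ∀ t : ℝ, 0 ≤ t → t ≤ 1 →
      f (g x + g' x ((t • p + (1 - t) • q) - x)) ≤
        t * f (g x + g' x (p - x)) + (1 - t) * f (g x + g' x (q - x)) := by
    intro p q t ht ht1
    have hcmb : (t • p + (1 - t) • q) - x = t • (p - x) + (1 - t) • (q - x) := by module
    have hlin : g x + g' x ((t • p + (1 - t) • q) - x)
        = t • (g x + g' x (p - x)) + (1 - t) • (g x + g' x (q - x)) := by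
      rw [hcmb, map_add, map_smul, map_smul]; module
    rw [hlin]
    exact hfconv.2 (Set.mem_univ _) (Set.mem_univ _) ht (by linarith) (by ring)
  have hφ2 : ∀ p q : EuclideanSpace ℝ (Fin n), ∀ t : ℝ, 0 ≤ t → t ≤ 1 →
      f (tg + tJ ((t • p + (1 - t) • q) - x)) ≤
        t * f (tg + tJ (p - x)) + (1 - t) * f (tg + tJ (q - x)) := by
    intro p q t ht ht1
    have hcmb : (t • p + (1 - t) • q) - x = t • (p - x) + (1 - t) • (q - x) := by module
    have hlin : tg + tJ ((t • p + (1 - t) • q) - x)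
        = t • (tg + tJ (p - x)) + (1 - t) • (tg + tJ (q - x)) := by
      rw [hcmb, map_add, map_smul, map_smul]; module
    rw [hlin]
    exact hfconv.2 (Set.mem_univ _) (Set.mem_univ _) ht (by linarith) (by ring)
  -- finiteness
  have hhatT : h xhat ≠ ⊤ := my_ne_top_of_add_le hx (hmin1 x)
  have hplusT : h xplus ≠ ⊤ := my_ne_top_of_add_le hx (hmin2 x)
  -- strong minimality
  have S1 : f (g x + g' x (xhat - x)) + M / 2 * ‖xhat - x‖ ^ 2 + (h xhat).toReal
      + M / 2 * ‖xplus - xhat‖ ^ 2 ≤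
      f (g x + g' x (xplus - x)) + M / 2 * ‖xplus - x‖ ^ 2 + (h xplus).toReal :=
    my_strong_min (fun y => f (g x + g' x (y - x))) hφ1 M hMpos h hconv hproper x xhat
      hmin1 hhatT xplus hplusT
  have S2 : f (tg + tJ (xplus - x)) + M / 2 * ‖xplus - x‖ ^ 2 + (h xplus).toReal
      + M / 2 * ‖xhat - xplus‖ ^ 2 ≤
      f (tg + tJ (xhat - x)) + M / 2 * ‖xhat - x‖ ^ 2 + (h xhat).toReal :=
    my_strong_min (fun y => f (tg + tJ (y - x))) hφ2 M hMpos h hconv hproper x xplus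
      hmin2 hplusT xhat hhatT
  rw [norm_sub_rev xhat xplus] at S2
  -- the four comparison bounds
  have B1 : f (tg + tJ (xhat - x)) - f (tg + g' x (xhat - x)) ≤
      ℓf * (‖tJ - g' x‖ * ‖xhat - x‖) := by
    have hdiff : (tg + tJ (xhat - x)) - (tg + g' x (xhat - x)) = (tJ - g' x) (xhat - x) := by
      rw [ContinuousLinearMap.sub_apply]; abel
    calc f (tg + tJ (xhat - x)) - f (tg + g' x (xhat - x))
        ≤ |f (tg + tJ (xhat - x)) - f (tg + g' x (xhat - x))| := le_abs_self _
      _ ≤ ℓf * ‖(tg + tJ (xhat - x)) - (tg + g' x (xhat - x))‖ := hfLip _ _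
      _ = ℓf * ‖(tJ - g' x) (xhat - x)‖ := by rw [hdiff]
      _ ≤ ℓf * (‖tJ - g' x‖ * ‖xhat - x‖) :=
          mul_le_mul_of_nonneg_left (ContinuousLinearMap.le_opNorm _ _) hℓf
  have B4 : f (tg + g' x (xplus - x)) - f (tg + tJ (xplus - x)) ≤
      ℓf * (‖tJ - g' x‖ * ‖xplus - x‖) := by
    have hdiff : (tg + tJ (xplus - x)) - (tg + g' x (xplus - x)) = (tJ - g' x) (xplus - x) := by
      rw [ContinuousLinearMap.sub_apply]; abel
    calc f (tg + g' x (xplus - x)) - f (tg + tJ (xplus - x))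
        ≤ |f (tg + g' x (xplus - x)) - f (tg + tJ (xplus - x))| := le_abs_self _
      _ = |f (tg + tJ (xplus - x)) - f (tg + g' x (xplus - x))| := abs_sub_comm _ _
      _ ≤ ℓf * ‖(tg + tJ (xplus - x)) - (tg + g' x (xplus - x))‖ := hfLip _ _
      _ = ℓf * ‖(tJ - g' x) (xplus - x)‖ := by rw [hdiff]
      _ ≤ ℓf * (‖tJ - g' x‖ * ‖xplus - x‖) :=
          mul_le_mul_of_nonneg_left (ContinuousLinearMap.le_opNorm _ _) hℓf
  have B2 : f (tg + g' x (xhat - x)) ≤ f (g x + g' x (xhat - x))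
      + ⟪f' (g x + g' x (xhat - x)), tg - g x⟫ + Lf * ‖tg - g x‖ ^ 2 := by
    have hd2 := my_descent f f' Lf hLf hf' hf'L (tg + g' x (xhat - x)) (g x + g' x (xhat - x))
    have hdiff : (tg + g' x (xhat - x)) - (g x + g' x (xhat - x)) = tg - g x := by abel
    rwa [hdiff] at hd2
  have B3 : f (g x + g' x (xplus - x)) + ⟪f' (g x + g' x (xplus - x)), tg - g x⟫ ≤
      f (tg + g' x (xplus - x)) := by
    have hd3 := my_convex_grad f (f' (g x + g' x (xplus - x))) (tg + g' x (xplus - x))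
      (g x + g' x (xplus - x)) hfconv (hf' _)
    have hdiff : (tg + g' x (xplus - x)) - (g x + g' x (xplus - x)) = tg - g x := by abel
    rwa [hdiff] at hd3
  have B5 : ⟪f' (g x + g' x (xhat - x)), tg - g x⟫
      - ⟪f' (g x + g' x (xplus - x)), tg - g x⟫ ≤
      Lf * (ℓg * ‖xplus - xhat‖) * ‖tg - g x‖ := by
    rw [← inner_sub_left]
    refine le_trans (real_inner_le_norm _ _) ?_
    refine mul_le_mul_of_nonneg_right ?_ (norm_nonneg _)
    refine le_trans (hf'L _ _) ?_
    have hv12 : (g x + g' x (xhat - x)) - (g x + g' x (xplus - x)) = g' x (xhat - xplus) := by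
      simp only [map_sub]; abel
    rw [hv12]
    have h2 : ‖g' x (xhat - xplus)‖ ≤ ℓg * ‖xhat - xplus‖ :=
      le_trans (ContinuousLinearMap.le_opNorm _ _)
        (mul_le_mul_of_nonneg_right (hg'bd x) (norm_nonneg _))
    rw [norm_sub_rev xhat xplus] at h2
    exact mul_le_mul_of_nonneg_left h2 hLf
  -- key scalar inequality
  have key : M * ‖xplus - xhat‖ ^ 2 ≤ Lf * ℓg * ‖xplus - xhat‖ * ‖tg - g x‖
      + Lf * ‖tg - g x‖ ^ 2 + ℓf * (‖tJ - g' x‖ * ‖xhat - x‖)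
      + ℓf * (‖tJ - g' x‖ * ‖xplus - x‖) := by
    linarith [S1, S2, B1, B2, B3, B4, B5]
  have htri : ‖xhat - x‖ ≤ ‖xplus - xhat‖ + ‖xplus - x‖ := by
    calc ‖xhat - x‖ = ‖(xhat - xplus) + (xplus - x)‖ := by rw [sub_add_sub_cancel]
      _ ≤ ‖xhat - xplus‖ + ‖xplus - x‖ := norm_add_le _ _
      _ = ‖xplus - xhat‖ + ‖xplus - x‖ := by rw [norm_sub_rev]
  have hgoal' := my_scalar ℓf Lf ℓg Lg M (‖xhat - x‖) (‖xplus - x‖) (‖xplus - xhat‖)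
    (‖tg - g x‖) (‖tJ - g' x‖) hℓf hLf hℓg hLg hM (norm_nonneg _) (norm_nonneg _)
    (norm_nonneg _) (norm_nonneg _) (norm_nonneg _) key htri
  simp only [norm_smul, Real.norm_eq_abs, abs_of_pos hMpos, norm_sub_rev x xhat,
    norm_sub_rev x xplus]
  have e : ∀ c r : ℝ, c / M ^ 2 * (M * r) ^ 2 = c * r ^ 2 := by
    intro c r
    field_simp
  rw [e, e]
  exact hgoal'
end

section
/- (Closed form of the truncated stochastic gradient step.) Let $g^*\in\mathbb{R}$, $\tilde g\in\mathbb{R}$ with $\tilde g \ge g^*$, $\tilde J\in\mathbb{R}^n$ with $\tilde J\ne 0$, $M>0$, and $x\in\mathbb{R}^n$. Then the unique minimizer of $y\mapsto \max\{\tilde g + \langle\tilde J, y-x\rangle,\; g^*\} + \frac{M}{2}\|y-x\|^2$ is $y^* = x - \min\Bigl\{\frac{1}{M},\, \frac{\tilde g - g^*}{\|\tilde J\|^2}\Bigr\}\cdot \tilde J$. -/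
/-- Closed form of the truncated stochastic gradient step. -/
theorem stmt19 {n : ℕ} (gstar tg : ℝ) (htg : gstar ≤ tg)
    (tJ : EuclideanSpace ℝ (Fin n)) (htJ : tJ ≠ 0) (M : ℝ) (hM : 0 < M)
    (x : EuclideanSpace ℝ (Fin n)) :
    let obj : EuclideanSpace ℝ (Fin n) → ℝ :=
      fun y => max (tg + (inner ℝ tJ (y - x) : ℝ)) gstar + M / 2 * ‖y - x‖ ^ 2
    let ystar : EuclideanSpace ℝ (Fin n) :=
      x - (min (1 / M) ((tg - gstar) / ‖tJ‖ ^ 2)) • tJ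
    (∀ y, obj ystar ≤ obj y) ∧ ∀ y, (∀ z, obj y ≤ obj z) → y = ystar := by
  intro obj ystar
  have hJ2 : (0:ℝ) < ‖tJ‖ ^ 2 := by
    have := norm_pos_iff.mpr htJ
    positivity
  set Δ : ℝ := tg - gstar with hΔdef
  have hΔ : 0 ≤ Δ := by simp [hΔdef]; linarith
  set t : ℝ := min (1 / M) (Δ / ‖tJ‖ ^ 2) with ht
  have ht0 : 0 ≤ t := le_min (by positivity) (by positivity)
  have htM : t ≤ 1 / M := min_le_left _ _
  have htΔ : t ≤ Δ / ‖tJ‖ ^ 2 := min_le_right _ _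
  have hle : t * ‖tJ‖ ^ 2 ≤ Δ := by
    rw [← le_div_iff₀ hJ2]; exact htΔ
  have hMt : M * t ≤ 1 := by
    have h := (le_div_iff₀ hM).mp htM
    linarith
  have hfac : (Δ - t * ‖tJ‖ ^ 2) * (1 - M * t) = 0 := by
    rcases le_total (1 / M) (Δ / ‖tJ‖ ^ 2) with h | h
    · have hteq : t = 1 / M := min_eq_left h
      rw [hteq]; field_simp; ring
    · have hteq : t = Δ / ‖tJ‖ ^ 2 := min_eq_right h
      rw [hteq]; field_simp; ring
  -- value at ystar
  have hysub : ystar - x = -(t • tJ) := by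
    show x - t • tJ - x = -(t • tJ)
    abel
  have hinner_star : (inner ℝ tJ (ystar - x) : ℝ) = -(t * ‖tJ‖ ^ 2) := by
    rw [hysub, inner_neg_right, real_inner_smul_right, real_inner_self_eq_norm_sq]
  have hnorm_star : ‖ystar - x‖ ^ 2 = t ^ 2 * ‖tJ‖ ^ 2 := by
    rw [hysub, norm_neg, norm_smul, mul_pow, Real.norm_eq_abs, sq_abs]
  have hmaxstar : max (tg + (inner ℝ tJ (ystar - x) : ℝ)) gstar
      = gstar + M * t * Δ - M * t ^ 2 * ‖tJ‖ ^ 2 := by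
    rw [hinner_star]
    have h1 : tg + -(t * ‖tJ‖ ^ 2) = gstar + (Δ - t * ‖tJ‖ ^ 2) := by
      simp [hΔdef]; ring
    rw [h1, max_eq_left (by linarith)]
    nlinarith [hfac]
  have hobjstar : obj ystar = gstar + M * t * Δ - M / 2 * t ^ 2 * ‖tJ‖ ^ 2 := by
    show max (tg + (inner ℝ tJ (ystar - x) : ℝ)) gstar + M / 2 * ‖ystar - x‖ ^ 2
      = gstar + M * t * Δ - M / 2 * t ^ 2 * ‖tJ‖ ^ 2
    rw [hmaxstar, hnorm_star]; ring
  have key : ∀ y, obj ystar + M / 2 * ‖y - ystar‖ ^ 2 ≤ obj y := by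
    intro y
    have hA : (inner ℝ tJ (y - x) : ℝ) = (inner ℝ tJ (y - x) : ℝ) := rfl
    set a : ℝ := (inner ℝ tJ (y - x) : ℝ) with ha
    -- convex combination bound
    have hcomb : M * t * (tg + a) + (1 - M * t) * gstar ≤ max (tg + a) gstar := by
      have h1 := le_max_left (tg + a) gstar
      have h2 := le_max_right (tg + a) gstar
      nlinarith [mul_nonneg (mul_nonneg hM.le ht0) (sub_nonneg.mpr h1),
        mul_nonneg (sub_nonneg.mpr hMt) (sub_nonneg.mpr h2)]
    -- norm expansion
    have hsplit : y - ystar = (y - x) + t • tJ := by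
      show y - ystar = (y - x) + t • tJ
      rw [show ystar = x - t • tJ from rfl]
      abel
    have hexp : ‖y - ystar‖ ^ 2 = ‖y - x‖ ^ 2 + 2 * t * a + t ^ 2 * ‖tJ‖ ^ 2 := by
      rw [hsplit, @norm_add_sq_real, real_inner_smul_right, norm_smul,
        Real.norm_eq_abs, mul_pow, sq_abs, real_inner_comm, ← ha]
      ring
    have hobj : obj y = max (tg + a) gstar + M / 2 * ‖y - x‖ ^ 2 := rfl
    rw [hobj, hobjstar, hexp]
    have htgΔ : tg = gstar + Δ := by simp [hΔdef]
    nlinarith [hcomb]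
  clear_value obj ystar
  constructor
  · intro y
    have h1 := key y
    have hnn : 0 ≤ M / 2 * ‖y - ystar‖ ^ 2 := by positivity
    linarith
  · intro y hmin
    have h1 := key y
    have h2 := hmin ystar
    have h3 : M / 2 * ‖y - ystar‖ ^ 2 ≤ 0 := by linarith
    have h4 : ‖y - ystar‖ ^ 2 ≤ 0 := by
      by_contra hc
      push_neg at hc
      have hp : 0 < M / 2 * ‖y - ystar‖ ^ 2 := mul_pos (by linarith) hc
      linarith
    have h4' : ‖y - ystar‖ ^ 2 = 0 := le_antisymm h4 (sq_nonneg _)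
    have h5 : ‖y - ystar‖ = 0 := pow_eq_zero_iff two_ne_zero |>.mp h4'
    exact sub_eq_zero.mp (norm_eq_zero.mp h5)
end
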